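/- arXiv:2603.15388 — 3 statements merged into one kernel-verified Lean document; each statement's English description precedes it below -/
import Mathlib

section
/- In the finite phase-separated co-design model, fix behavior parameters θ₀ ∈ ℝ^m and φ₀ ∈ ℝ^n, and define the leader surrogate L_L(θ) = Σ_τ P(τ;θ₀,φ₀) · Σ_{t=0}^{T−1} γ^t (π_L(θ)(a_t|s_t)/π_L(θ₀)(a_t|s_t)) · A_L^{θ₀,φ₀,t}(s_t,a_t). Then the leader's direct gradient equals the surrogate gradient at the behavior parameters: ∇_θ J_L(θ,φ₀)|_{θ=θ₀} = ∇_θ L_L(θ)|_{θ=θ₀}. -/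
open scoped BigOperators

/-- A trajectory in the finite phase-separated co-design model, with leader horizon
`T + 1` (so `T + 1 ≥ 1`) and follower horizon `H + 1` (so `H + 1 ≥ 1`):
leader states `s 0, …, s (T+1)`, leader actions `a 0, …, a T`,
follower states `x 0, …, x H` and follower actions `b 0, …, b H`. -/
structure Traj (SL AL SF AF : Type) (T H : ℕ) where
  s : Fin (T + 2) → SL
  a : Fin (T + 1) → AL
  x : Fin (H + 1) → SF
  b : Fin (H + 1) → AF

instance instFintypeTraj (SL AL SF AF : Type) (T H : ℕ)
    [Fintype SL] [Fintype AL] [Fintype SF] [Fintype AF] :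
    Fintype (Traj SL AL SF AF T H) :=
  Fintype.ofEquiv
    ((Fin (T + 2) → SL) × (Fin (T + 1) → AL) × (Fin (H + 1) → SF) × (Fin (H + 1) → AF))
    { toFun := fun p => ⟨p.1, p.2.1, p.2.2.1, p.2.2.2⟩
      invFun := fun τ => ⟨τ.s, τ.a, τ.x, τ.b⟩
      left_inv := fun _ => rfl
      right_inv := fun _ => rfl }

variable {SL AL SF AF : Type} [Fintype SL] [Fintype AL] [Fintype SF] [Fintype AF]
variable {m n T H : ℕ}

/-- The terminal morphology `s_T` of a trajectory. -/
def Traj.z (τ : Traj SL AL SF AF T H) : SL := τ.s (Fin.last (T + 1))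

/-- Probability `P(τ; θ, φ)` of a trajectory. -/
def trajProb (μL : SL → ℝ) (PL : SL → AL → SL → ℝ) (μF : SL → SF → ℝ)
    (PF : SL → SF → AF → SF → ℝ) (πL : (Fin m → ℝ) → SL → AL → ℝ)
    (πF : (Fin n → ℝ) → SL → SF → AF → ℝ) (θ : Fin m → ℝ) (φ : Fin n → ℝ)
    (τ : Traj SL AL SF AF T H) : ℝ :=
  μL (τ.s 0) *
    (∏ t : Fin (T + 1),
      πL θ (τ.s t.castSucc) (τ.a t) * PL (τ.s t.castSucc) (τ.a t) (τ.s t.succ)) *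
    μF τ.z (τ.x 0) *
    (∏ k : Fin (H + 1), πF φ τ.z (τ.x k) (τ.b k)) *
    (∏ k : Fin H, PF τ.z (τ.x k.castSucc) (τ.b k.castSucc) (τ.x k.succ))

/-- Follower objective `J_F(θ, φ)`. -/
def JF (γ : ℝ) (μL : SL → ℝ) (PL : SL → AL → SL → ℝ) (μF : SL → SF → ℝ)
    (PF : SL → SF → AF → SF → ℝ) (RF : SL → SF → AF → ℝ)
    (πL : (Fin m → ℝ) → SL → AL → ℝ) (πF : (Fin n → ℝ) → SL → SF → AF → ℝ)
    (T H : ℕ) (θ : Fin m → ℝ) (φ : Fin n → ℝ) : ℝ :=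
  ∑ τ : Traj SL AL SF AF T H, trajProb μL PL μF PF πL πF θ φ τ *
    ∑ k : Fin (H + 1), γ ^ (k : ℕ) * RF τ.z (τ.x k) (τ.b k)

/-- Leader objective `J_L(θ, φ)`. -/
def JL (γ : ℝ) (μL : SL → ℝ) (PL : SL → AL → SL → ℝ) (μF : SL → SF → ℝ)
    (PF : SL → SF → AF → SF → ℝ) (RL : SL → AL → ℝ) (RF : SL → SF → AF → ℝ)
    (πL : (Fin m → ℝ) → SL → AL → ℝ) (πF : (Fin n → ℝ) → SL → SF → AF → ℝ)
    (T H : ℕ) (θ : Fin m → ℝ) (φ : Fin n → ℝ) : ℝ :=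
  ∑ τ : Traj SL AL SF AF T H, trajProb μL PL μF PF πL πF θ φ τ *
    ((∑ t : Fin (T + 1), γ ^ (t : ℕ) * RL (τ.s t.castSucc) (τ.a t)) +
      γ ^ (T + 1) * ∑ k : Fin (H + 1), γ ^ (k : ℕ) * RF τ.z (τ.x k) (τ.b k))

/-- Follower state-action value `Q_F^{φ,k}(x, b; z)`, written in terms of the number
`r` of remaining follower steps after the current one (at stage `k` of a follower
phase with horizon `H + 1`, one has `r = H - k`): the expectation of the discounted
reward-to-go `∑_{j = k}^{H} γ^{j - k} R_F(z, x_j, b_j)` over follower trajectories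
generated from `x, b` by `P_F(·|z,·,·)` and `π_F(φ)(·|·; z)`. -/
def Qrem (γ : ℝ) (PF : SL → SF → AF → SF → ℝ) (RF : SL → SF → AF → ℝ)
    (πF : (Fin n → ℝ) → SL → SF → AF → ℝ) (z : SL) (φ : Fin n → ℝ) :
    ℕ → SF → AF → ℝ
  | 0, x, b => RF z x b
  | r + 1, x, b => RF z x b +
      γ * ∑ x' : SF, PF z x b x' * ∑ b' : AF, πF φ z x' b' * Qrem γ PF RF πF z φ r x' b'

/-- Follower advantage `A_F^{φ,k}(x, b; z) = Q_F^{φ,k}(x, b; z) - V_F^{φ,k}(x; z)`,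
again indexed by the number `r = H - k` of remaining follower steps. -/
def advF (γ : ℝ) (PF : SL → SF → AF → SF → ℝ) (RF : SL → SF → AF → ℝ)
    (πF : (Fin n → ℝ) → SL → SF → AF → ℝ) (z : SL) (φ : Fin n → ℝ)
    (r : ℕ) (x : SF) (b : AF) : ℝ :=
  Qrem γ PF RF πF z φ r x b -
    ∑ b' : AF, πF φ z x b' * Qrem γ PF RF πF z φ r x b'

/-- Leader state-action value `Q_L^{θ,φ,t}(s, a)`, indexed by the number `r` of
remaining leader steps after the current one (at stage `t` of a leader phase with
horizon `T + 1`, one has `r = T - t`); the follower phase has horizon `H + 1`. -/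
def QLrem (γ : ℝ) (PL : SL → AL → SL → ℝ) (μF : SL → SF → ℝ)
    (PF : SL → SF → AF → SF → ℝ) (RL : SL → AL → ℝ) (RF : SL → SF → AF → ℝ)
    (πL : (Fin m → ℝ) → SL → AL → ℝ) (πF : (Fin n → ℝ) → SL → SF → AF → ℝ)
    (H : ℕ) (θ : Fin m → ℝ) (φ : Fin n → ℝ) : ℕ → SL → AL → ℝ
  | 0, s, a => RL s a + γ * ∑ z : SL, PL s a z *
      ∑ x : SF, μF z x * ∑ b : AF, πF φ z x b * Qrem γ PF RF πF z φ H x b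
  | r + 1, s, a => RL s a + γ * ∑ s' : SL, PL s a s' *
      ∑ a' : AL, πL θ s' a' * QLrem γ PL μF PF RL RF πL πF H θ φ r s' a'

/-- Leader advantage `A_L^{θ,φ,t}(s, a) = Q_L^{θ,φ,t}(s, a) - V_L^{θ,φ,t}(s)`,
indexed by the number `r = T - t` of remaining leader steps. -/
def advL (γ : ℝ) (PL : SL → AL → SL → ℝ) (μF : SL → SF → ℝ)
    (PF : SL → SF → AF → SF → ℝ) (RL : SL → AL → ℝ) (RF : SL → SF → AF → ℝ)
    (πL : (Fin m → ℝ) → SL → AL → ℝ) (πF : (Fin n → ℝ) → SL → SF → AF → ℝ)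
    (H : ℕ) (θ : Fin m → ℝ) (φ : Fin n → ℝ) (r : ℕ) (s : SL) (a : AL) : ℝ :=
  QLrem γ PL μF PF RL RF πL πF H θ φ r s a -
    ∑ a' : AL, πL θ s a' * QLrem γ PL μF PF RL RF πL πF H θ φ r s a'

section Aux
variable {SL AL SF AF : Type} [Fintype SL] [Fintype AL] [Fintype SF] [Fintype AF]
variable {m n T H : ℕ}

def trajEquiv (SL AL SF AF : Type) (T H : ℕ) :
    ((Fin (T + 2) → SL) × (Fin (T + 1) → AL) × (Fin (H + 1) → SF) × (Fin (H + 1) → AF))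
      ≃ Traj SL AL SF AF T H where
  toFun := fun p => ⟨p.1, p.2.1, p.2.2.1, p.2.2.2⟩
  invFun := fun τ => ⟨τ.s, τ.a, τ.x, τ.b⟩
  left_inv := fun _ => rfl
  right_inv := fun _ => rfl

lemma sum_traj {β : Type} [AddCommMonoid β] (f : Traj SL AL SF AF T H → β) :
    ∑ τ : Traj SL AL SF AF T H, f τ
      = ∑ s : Fin (T + 2) → SL, ∑ a : Fin (T + 1) → AL, ∑ x : Fin (H + 1) → SF,
          ∑ b : Fin (H + 1) → AF, f ⟨s, a, x, b⟩ := by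
  rw [← Equiv.sum_comp (trajEquiv SL AL SF AF T H) f]
  rw [Fintype.sum_prod_type]
  simp only [Fintype.sum_prod_type]
  rfl

lemma sum_pi_succ {S : Type} [Fintype S] {k : ℕ} {β : Type} [AddCommMonoid β]
    (f : (Fin (k + 1) → S) → β) :
    ∑ g : Fin (k + 1) → S, f g = ∑ s0 : S, ∑ g : Fin k → S, f (Fin.cons s0 g) := by
  rw [← Equiv.sum_comp (Fin.consEquiv fun _ => S) f, Fintype.sum_prod_type]
  rfl

lemma sum_pi_one {S : Type} [Fintype S] {β : Type} [AddCommMonoid β]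
    (f : (Fin 1 → S) → β) :
    ∑ g : Fin 1 → S, f g = ∑ s0 : S, f ![s0] := by
  rw [sum_pi_succ f]
  congr 1; ext s0
  rw [Fintype.sum_unique (ι := Fin 0 → S)]
  exact congrArg f (funext fun i => by fin_cases i; rfl)

end Aux
section Follower
variable {SL AL SF AF : Type} [Fintype SL] [Fintype AL] [Fintype SF] [Fintype AF]
variable {n : ℕ}

/-- Follower-phase weighted sum. -/
def Fsum (PF : SL → SF → AF → SF → ℝ) (πF : (Fin n → ℝ) → SL → SF → AF → ℝ)
    (φ : Fin n → ℝ) (z : SL) (H : ℕ) (ν : SF → ℝ)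
    (F : (Fin (H + 1) → SF) → (Fin (H + 1) → AF) → ℝ) : ℝ :=
  ∑ x : Fin (H + 1) → SF, ∑ b : Fin (H + 1) → AF,
    ν (x 0) * (∏ k : Fin (H + 1), πF φ z (x k) (b k)) *
      (∏ k : Fin H, PF z (x k.castSucc) (b k.castSucc) (x k.succ)) * F x b

lemma fpeel (PF : SL → SF → AF → SF → ℝ) (πF : (Fin n → ℝ) → SL → SF → AF → ℝ)
    (φ : Fin n → ℝ) (z : SL) (H : ℕ) (ν : SF → ℝ)
    (F : (Fin (H + 2) → SF) → (Fin (H + 2) → AF) → ℝ) :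
    Fsum PF πF φ z (H + 1) ν F
      = ∑ x0 : SF, ν x0 * ∑ b0 : AF, πF φ z x0 b0 *
          Fsum PF πF φ z H (PF z x0 b0)
            (fun x b => F (Fin.cons x0 x) (Fin.cons b0 b)) := by
  unfold Fsum
  rw [sum_pi_succ]
  refine Finset.sum_congr rfl fun x0 _ => ?_
  simp only [sum_pi_succ (S := AF) (k := H + 1) (β := ℝ)]
  simp only [Finset.mul_sum]
  rw [Finset.sum_comm]
  refine Finset.sum_congr rfl fun b0 _ => ?_
  refine Finset.sum_congr rfl fun xp _ => ?_
  refine Finset.sum_congr rfl fun bp _ => ?_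
  simp only [Fin.prod_univ_succ, Fin.cons_zero, Fin.cons_succ, Fin.castSucc_zero,
    ← Fin.succ_castSucc]
  ring

lemma fbase (PF : SL → SF → AF → SF → ℝ) (πF : (Fin n → ℝ) → SL → SF → AF → ℝ)
    (φ : Fin n → ℝ) (z : SL) (ν : SF → ℝ)
    (F : (Fin 1 → SF) → (Fin 1 → AF) → ℝ) :
    Fsum PF πF φ z 0 ν F
      = ∑ x0 : SF, ν x0 * ∑ b0 : AF, πF φ z x0 b0 * F ![x0] ![b0] := by
  unfold Fsum
  rw [sum_pi_one]
  refine Finset.sum_congr rfl fun x0 _ => ?_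
  rw [sum_pi_one, Finset.mul_sum]
  refine Finset.sum_congr rfl fun b0 _ => ?_
  simp [Fin.prod_univ_one]
  ring

end Follower
section Follower2
set_option linter.unusedSectionVars false
variable {SL AL SF AF : Type} [Fintype SL] [Fintype AL] [Fintype SF] [Fintype AF]
variable {n : ℕ}

lemma Fsum_lin (PF : SL → SF → AF → SF → ℝ) (πF : (Fin n → ℝ) → SL → SF → AF → ℝ)
    (φ : Fin n → ℝ) (z : SL) (H : ℕ) (ν : SF → ℝ) (c d : ℝ)
    (F G : (Fin (H + 1) → SF) → (Fin (H + 1) → AF) → ℝ) :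
    Fsum PF πF φ z H ν (fun x b => c * F x b + d * G x b)
      = c * Fsum PF πF φ z H ν F + d * Fsum PF πF φ z H ν G := by
  unfold Fsum
  simp only [Finset.mul_sum]
  rw [← Finset.sum_add_distrib]
  refine Finset.sum_congr rfl fun x _ => ?_
  rw [← Finset.sum_add_distrib]
  refine Finset.sum_congr rfl fun b _ => ?_
  ring

lemma F1 (PF : SL → SF → AF → SF → ℝ) (hPF1 : ∀ z x b, ∑ x' : SF, PF z x b x' = 1)
    (πF : (Fin n → ℝ) → SL → SF → AF → ℝ) (hπF1 : ∀ φ z x, ∑ b : AF, πF φ z x b = 1)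
    (φ : Fin n → ℝ) (z : SL) :
    ∀ (H : ℕ) (ν : SF → ℝ), Fsum PF πF φ z H ν (fun _ _ => 1) = ∑ x : SF, ν x := by
  intro H
  induction H with
  | zero =>
      intro ν
      rw [fbase]
      refine Finset.sum_congr rfl fun x0 _ => ?_
      simp only [mul_one, hπF1]
  | succ H ih =>
      intro ν
      rw [fpeel]
      refine Finset.sum_congr rfl fun x0 _ => ?_
      simp only [ih, hPF1, mul_one, hπF1]

lemma F2 (γ : ℝ) (PF : SL → SF → AF → SF → ℝ)
    (hPF1 : ∀ z x b, ∑ x' : SF, PF z x b x' = 1)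
    (RF : SL → SF → AF → ℝ)
    (πF : (Fin n → ℝ) → SL → SF → AF → ℝ) (hπF1 : ∀ φ z x, ∑ b : AF, πF φ z x b = 1)
    (φ : Fin n → ℝ) (z : SL) :
    ∀ (H : ℕ) (ν : SF → ℝ),
      Fsum PF πF φ z H ν
          (fun x b => ∑ k : Fin (H + 1), γ ^ (k : ℕ) * RF z (x k) (b k))
        = ∑ x0 : SF, ν x0 * ∑ b0 : AF, πF φ z x0 b0 * Qrem γ PF RF πF z φ H x0 b0 := by
  intro H
  induction H with
  | zero =>
      intro ν
      rw [fbase]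
      simp [Qrem]
  | succ H ih =>
      intro ν
      rw [fpeel]
      refine Finset.sum_congr rfl fun x0 _ => ?_
      rw [Finset.mul_sum, Finset.mul_sum]
      refine Finset.sum_congr rfl fun b0 _ => ?_
      have hF : (fun (x : Fin (H + 1) → SF) (b : Fin (H + 1) → AF) =>
          ∑ k : Fin (H + 2), γ ^ (k : ℕ) *
              RF z (Fin.cons (α := fun _ => SF) x0 x k) (Fin.cons (α := fun _ => AF) b0 b k))
          = fun x b => RF z x0 b0 * 1 +
              γ * ∑ k : Fin (H + 1), γ ^ (k : ℕ) * RF z (x k) (b k) := by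
        funext x b
        rw [Fin.sum_univ_succ]
        simp only [Fin.cons_zero, Fin.cons_succ, Fin.val_succ, pow_zero, one_mul, mul_one,
          pow_succ', Finset.mul_sum, mul_assoc, Fin.val_zero]
      rw [hF, Fsum_lin, F1 PF hPF1 πF hπF1, ih]
      simp only [Qrem, hPF1]
      ring
end Follower2
section Leader
set_option linter.unusedSectionVars false
variable {SL AL SF AF : Type} [Fintype SL] [Fintype AL] [Fintype SF] [Fintype AF]
variable {m n : ℕ}

/-- Prepend a leader step to a trajectory. -/
def Traj.cons {T H : ℕ} (s0 : SL) (a0 : AL) (τ : Traj SL AL SF AF T H) :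
    Traj SL AL SF AF (T + 1) H :=
  ⟨Fin.cons s0 τ.s, Fin.cons a0 τ.a, τ.x, τ.b⟩

/-- Weighted sum over trajectories with initial distribution `ν`. -/
def Etraj (PL : SL → AL → SL → ℝ) (μF : SL → SF → ℝ) (PF : SL → SF → AF → SF → ℝ)
    (πL : (Fin m → ℝ) → SL → AL → ℝ) (πF : (Fin n → ℝ) → SL → SF → AF → ℝ)
    (θ : Fin m → ℝ) (φ : Fin n → ℝ) (T H : ℕ) (ν : SL → ℝ)
    (F : Traj SL AL SF AF T H → ℝ) : ℝ :=
  ∑ τ : Traj SL AL SF AF T H, trajProb ν PL μF PF πL πF θ φ τ * F τ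

lemma Etraj_lin (PL : SL → AL → SL → ℝ) (μF : SL → SF → ℝ) (PF : SL → SF → AF → SF → ℝ)
    (πL : (Fin m → ℝ) → SL → AL → ℝ) (πF : (Fin n → ℝ) → SL → SF → AF → ℝ)
    (θ : Fin m → ℝ) (φ : Fin n → ℝ) (T H : ℕ) (ν : SL → ℝ) (c d : ℝ)
    (F G : Traj SL AL SF AF T H → ℝ) :
    Etraj PL μF PF πL πF θ φ T H ν (fun τ => c * F τ + d * G τ)
      = c * Etraj PL μF PF πL πF θ φ T H ν F + d * Etraj PL μF PF πL πF θ φ T H ν G := by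
  unfold Etraj
  simp only [Finset.mul_sum]
  rw [← Finset.sum_add_distrib]
  exact Finset.sum_congr rfl fun τ _ => by ring

lemma epeel (PL : SL → AL → SL → ℝ) (μF : SL → SF → ℝ) (PF : SL → SF → AF → SF → ℝ)
    (πL : (Fin m → ℝ) → SL → AL → ℝ) (πF : (Fin n → ℝ) → SL → SF → AF → ℝ)
    (θ : Fin m → ℝ) (φ : Fin n → ℝ) (T H : ℕ) (ν : SL → ℝ)
    (F : Traj SL AL SF AF (T + 1) H → ℝ) :
    Etraj PL μF PF πL πF θ φ (T + 1) H ν F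
      = ∑ s0 : SL, ν s0 * ∑ a0 : AL, πL θ s0 a0 *
          Etraj PL μF PF πL πF θ φ T H (PL s0 a0) (fun τ => F (Traj.cons s0 a0 τ)) := by
  unfold Etraj trajProb
  simp only [sum_traj]
  simp only [sum_pi_succ (S := SL) (k := T + 2) (β := ℝ)]
  refine Finset.sum_congr rfl fun s0 _ => ?_
  simp only [sum_pi_succ (S := AL) (k := T + 1) (β := ℝ)]
  simp only [Finset.mul_sum]
  rw [Finset.sum_comm]
  refine Finset.sum_congr rfl fun a0 _ => ?_
  refine Finset.sum_congr rfl fun sp _ => ?_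
  refine Finset.sum_congr rfl fun ap _ => ?_
  refine Finset.sum_congr rfl fun x _ => ?_
  refine Finset.sum_congr rfl fun b _ => ?_
  simp only [Traj.cons, Traj.z, Fin.prod_univ_succ, Fin.cons_zero, Fin.cons_succ,
    Fin.castSucc_zero, ← Fin.succ_castSucc, ← Fin.succ_last]
  ring

lemma ebase (PL : SL → AL → SL → ℝ) (μF : SL → SF → ℝ) (PF : SL → SF → AF → SF → ℝ)
    (πL : (Fin m → ℝ) → SL → AL → ℝ) (πF : (Fin n → ℝ) → SL → SF → AF → ℝ)
    (θ : Fin m → ℝ) (φ : Fin n → ℝ) (H : ℕ) (ν : SL → ℝ)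
    (F : Traj SL AL SF AF 0 H → ℝ) :
    Etraj PL μF PF πL πF θ φ 0 H ν F
      = ∑ s0 : SL, ν s0 * ∑ a0 : AL, πL θ s0 a0 * ∑ s1 : SL, PL s0 a0 s1 *
          Fsum PF πF φ s1 H (μF s1) (fun x b => F ⟨![s0, s1], ![a0], x, b⟩) := by
  unfold Etraj trajProb Fsum
  simp only [sum_traj]
  simp only [sum_pi_succ (S := SL) (k := 1) (β := ℝ)]
  simp only [sum_pi_one (S := SL) (β := ℝ)]
  refine Finset.sum_congr rfl fun s0 _ => ?_
  simp only [sum_pi_one (S := AL) (β := ℝ)]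
  simp only [Finset.mul_sum]
  rw [Finset.sum_comm]
  refine Finset.sum_congr rfl fun a0 _ => ?_
  refine Finset.sum_congr rfl fun s1 _ => ?_
  refine Finset.sum_congr rfl fun x _ => ?_
  refine Finset.sum_congr rfl fun b _ => ?_
  simp only [Traj.z, Fin.prod_univ_succ, Fin.prod_univ_zero, Fin.castSucc_zero,
    ← Fin.succ_last, Matrix.vecCons, Fin.cons_zero, Fin.cons_succ,
    show Fin.last 0 = 0 from rfl]
  ring

end Leader
section LeaderVal
set_option linter.unusedSectionVars false
variable {SL AL SF AF : Type} [Fintype SL] [Fintype AL] [Fintype SF] [Fintype AF]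
variable {m n : ℕ}

/-- Total discounted return of a trajectory. -/
def Gtot (γ : ℝ) (RL : SL → AL → ℝ) (RF : SL → SF → AF → ℝ) (T H : ℕ)
    (τ : Traj SL AL SF AF T H) : ℝ :=
  (∑ t : Fin (T + 1), γ ^ (t : ℕ) * RL (τ.s t.castSucc) (τ.a t)) +
    γ ^ (T + 1) * ∑ k : Fin (H + 1), γ ^ (k : ℕ) * RF τ.z (τ.x k) (τ.b k)

lemma Gtot_cons (γ : ℝ) (RL : SL → AL → ℝ) (RF : SL → SF → AF → ℝ) {T H : ℕ}
    (s0 : SL) (a0 : AL) (τ : Traj SL AL SF AF T H) :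
    Gtot γ RL RF (T + 1) H (Traj.cons s0 a0 τ)
      = RL s0 a0 * 1 + γ * Gtot γ RL RF T H τ := by
  unfold Gtot Traj.cons Traj.z
  simp only [Fin.sum_univ_succ, Fin.cons_zero, Fin.cons_succ, Fin.castSucc_zero,
    ← Fin.succ_castSucc, ← Fin.succ_last, Fin.val_succ, Fin.val_zero, pow_zero, one_mul,
    pow_succ', Finset.mul_sum, mul_assoc, mul_one, mul_add]
  ring

lemma EN (γ : ℝ) (PL : SL → AL → SL → ℝ) (hPL1 : ∀ s a, ∑ s' : SL, PL s a s' = 1)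
    (μF : SL → SF → ℝ) (hμF1 : ∀ z, ∑ x : SF, μF z x = 1)
    (PF : SL → SF → AF → SF → ℝ) (hPF1 : ∀ z x b, ∑ x' : SF, PF z x b x' = 1)
    (πL : (Fin m → ℝ) → SL → AL → ℝ) (hπL1 : ∀ θ s, ∑ a : AL, πL θ s a = 1)
    (πF : (Fin n → ℝ) → SL → SF → AF → ℝ) (hπF1 : ∀ φ z x, ∑ b : AF, πF φ z x b = 1)
    (θ : Fin m → ℝ) (φ : Fin n → ℝ) :
    ∀ (T : ℕ) {H : ℕ} (ν : SL → ℝ),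
      Etraj PL μF PF πL πF θ φ T H ν (fun _ => 1) = ∑ s : SL, ν s := by
  intro T
  induction T with
  | zero =>
      intro H ν
      rw [ebase]
      simp only [F1 PF hPF1 πF hπF1, hμF1, mul_one, hPL1, hπL1]
  | succ T ih =>
      intro H ν
      rw [epeel]
      simp only [ih, hPL1, mul_one, hπL1]

lemma EW1 (γ : ℝ) (PL : SL → AL → SL → ℝ) (hPL1 : ∀ s a, ∑ s' : SL, PL s a s' = 1)
    (μF : SL → SF → ℝ) (hμF1 : ∀ z, ∑ x : SF, μF z x = 1)
    (PF : SL → SF → AF → SF → ℝ) (hPF1 : ∀ z x b, ∑ x' : SF, PF z x b x' = 1)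
    (πL : (Fin m → ℝ) → SL → AL → ℝ) (hπL1 : ∀ θ s, ∑ a : AL, πL θ s a = 1)
    (πF : (Fin n → ℝ) → SL → SF → AF → ℝ) (hπF1 : ∀ φ z x, ∑ b : AF, πF φ z x b = 1)
    (θ : Fin m → ℝ) (φ : Fin n → ℝ) :
    ∀ (T : ℕ) {H : ℕ} (ν : SL → ℝ) (h : SL → AL → ℝ),
      Etraj PL μF PF πL πF θ φ T H ν (fun τ => h (τ.s 0) (τ.a 0))
        = ∑ s0 : SL, ν s0 * ∑ a0 : AL, πL θ s0 a0 * h s0 a0 := by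
  intro T
  induction T with
  | zero =>
      intro H ν h
      rw [ebase]
      refine Finset.sum_congr rfl fun s0 _ => ?_
      refine congrArg _ (Finset.sum_congr rfl fun a0 _ => ?_)
      refine congrArg _ ?_
      have step : ∀ s1 : SL,
          Fsum PF πF φ s1 H (μF s1)
            (fun x b => h ((⟨![s0, s1], ![a0], x, b⟩ : Traj SL AL SF AF 0 H).s 0)
              ((⟨![s0, s1], ![a0], x, b⟩ : Traj SL AL SF AF 0 H).a 0)) = h s0 a0 := by
        intro s1
        have e : (fun (x : Fin (H + 1) → SF) (b : Fin (H + 1) → AF) =>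
            h ((⟨![s0, s1], ![a0], x, b⟩ : Traj SL AL SF AF 0 H).s 0)
              ((⟨![s0, s1], ![a0], x, b⟩ : Traj SL AL SF AF 0 H).a 0))
            = fun _ _ => h s0 a0 * 1 + 0 * 1 := by
          funext x b; simp
        rw [e, Fsum_lin, F1 PF hPF1 πF hπF1, hμF1]
        ring
      simp only [step]
      rw [← Finset.sum_mul, hPL1, one_mul]
  | succ T ih =>
      intro H ν h
      rw [epeel]
      refine Finset.sum_congr rfl fun s0 _ => ?_
      refine congrArg _ (Finset.sum_congr rfl fun a0 _ => ?_)
      refine congrArg _ ?_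
      have e : (fun τ : Traj SL AL SF AF T H =>
          h ((Traj.cons s0 a0 τ).s 0) ((Traj.cons s0 a0 τ).a 0))
          = fun _ => h s0 a0 * 1 + 0 * 1 := by
        funext τ; simp [Traj.cons]
      rw [e, Etraj_lin, EN γ PL hPL1 μF hμF1 PF hPF1 πL hπL1 πF hπF1 θ φ T, hPL1]
      ring

lemma EW (γ : ℝ) (PL : SL → AL → SL → ℝ) (hPL1 : ∀ s a, ∑ s' : SL, PL s a s' = 1)
    (μF : SL → SF → ℝ) (hμF1 : ∀ z, ∑ x : SF, μF z x = 1)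
    (PF : SL → SF → AF → SF → ℝ) (hPF1 : ∀ z x b, ∑ x' : SF, PF z x b x' = 1)
    (RL : SL → AL → ℝ) (RF : SL → SF → AF → ℝ)
    (πL : (Fin m → ℝ) → SL → AL → ℝ) (hπL1 : ∀ θ s, ∑ a : AL, πL θ s a = 1)
    (πF : (Fin n → ℝ) → SL → SF → AF → ℝ) (hπF1 : ∀ φ z x, ∑ b : AF, πF φ z x b = 1)
    (θ : Fin m → ℝ) (φ : Fin n → ℝ) :
    ∀ (T : ℕ) {H : ℕ} (ν : SL → ℝ) (h : SL → AL → ℝ),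
      Etraj PL μF PF πL πF θ φ T H ν
          (fun τ => h (τ.s 0) (τ.a 0) * Gtot γ RL RF T H τ)
        = ∑ s0 : SL, ν s0 * ∑ a0 : AL, πL θ s0 a0 * h s0 a0 *
            QLrem γ PL μF PF RL RF πL πF H θ φ T s0 a0 := by
  intro T
  induction T with
  | zero =>
      intro H ν h
      rw [ebase]
      refine Finset.sum_congr rfl fun s0 _ => ?_
      refine congrArg _ (Finset.sum_congr rfl fun a0 _ => ?_)
      have step : ∀ s1 : SL,
          Fsum PF πF φ s1 H (μF s1)
            (fun x b =>
              h ((⟨![s0, s1], ![a0], x, b⟩ : Traj SL AL SF AF 0 H).s 0)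
                ((⟨![s0, s1], ![a0], x, b⟩ : Traj SL AL SF AF 0 H).a 0) *
                Gtot γ RL RF 0 H ⟨![s0, s1], ![a0], x, b⟩)
          = h s0 a0 * (RL s0 a0 +
              γ * ∑ x : SF, μF s1 x * ∑ b : AF, πF φ s1 x b *
                Qrem γ PF RF πF s1 φ H x b) := by
        intro s1
        have e : (fun (x : Fin (H + 1) → SF) (b : Fin (H + 1) → AF) =>
            h ((⟨![s0, s1], ![a0], x, b⟩ : Traj SL AL SF AF 0 H).s 0)
              ((⟨![s0, s1], ![a0], x, b⟩ : Traj SL AL SF AF 0 H).a 0) *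
              Gtot γ RL RF 0 H ⟨![s0, s1], ![a0], x, b⟩)
            = fun x b => (h s0 a0 * RL s0 a0) * 1 +
                (h s0 a0 * γ) * ∑ k : Fin (H + 1), γ ^ (k : ℕ) * RF s1 (x k) (b k) := by
          funext x b
          simp only [Gtot, Traj.z, Matrix.cons_val_zero, Fin.sum_univ_succ,
            Fin.sum_univ_zero, Fin.castSucc_zero, Fin.val_zero, pow_zero, one_mul,
            pow_one, add_zero]
          have hz : (![s0, s1] : Fin 2 → SL) (Fin.last 1) = s1 := rfl
          rw [hz]
          ring
        rw [e, Fsum_lin, F1 PF hPF1 πF hπF1, hμF1, F2 γ PF hPF1 RF πF hπF1]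
        ring
      simp only [step]
      have e2 : ∀ s1 : SL, PL s0 a0 s1 * (h s0 a0 * (RL s0 a0 +
          γ * ∑ x : SF, μF s1 x * ∑ b : AF, πF φ s1 x b * Qrem γ PF RF πF s1 φ H x b))
          = (h s0 a0 * RL s0 a0) * PL s0 a0 s1 + (h s0 a0 * γ) *
            (PL s0 a0 s1 * ∑ x : SF, μF s1 x * ∑ b : AF, πF φ s1 x b *
              Qrem γ PF RF πF s1 φ H x b) := fun s1 => by ring
      simp only [e2]
      rw [Finset.sum_add_distrib, ← Finset.mul_sum, ← Finset.mul_sum, hPL1]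
      simp only [QLrem]
      ring
  | succ T ih =>
      intro H ν h
      rw [epeel]
      refine Finset.sum_congr rfl fun s0 _ => ?_
      refine congrArg _ (Finset.sum_congr rfl fun a0 _ => ?_)
      have e : (fun τ : Traj SL AL SF AF T H =>
          h ((Traj.cons s0 a0 τ).s 0) ((Traj.cons s0 a0 τ).a 0) *
            Gtot γ RL RF (T + 1) H (Traj.cons s0 a0 τ))
          = fun τ => (h s0 a0 * RL s0 a0) * 1 +
              (h s0 a0 * γ) * ((fun _ _ => (1 : ℝ)) (τ.s 0) (τ.a 0) * Gtot γ RL RF T H τ) := by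
        funext τ
        rw [Gtot_cons]
        have h1 : (Traj.cons s0 a0 τ).s 0 = s0 := rfl
        have h2 : (Traj.cons s0 a0 τ).a 0 = a0 := rfl
        rw [h1, h2]
        ring
      rw [e, Etraj_lin, EN γ PL hPL1 μF hμF1 PF hPF1 πL hπL1 πF hπF1 θ φ T,
        ih (PL s0 a0) (fun _ _ => 1), hPL1]
      simp only [QLrem, mul_one, one_mul]
      ring
end LeaderVal
section Core
set_option linter.unusedSectionVars false
variable {SL AL SF AF : Type} [Fintype SL] [Fintype AL] [Fintype SF] [Fintype AF]
variable {m n : ℕ}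

lemma EZ (γ : ℝ) (PL : SL → AL → SL → ℝ) (hPL1 : ∀ s a, ∑ s' : SL, PL s a s' = 1)
    (μF : SL → SF → ℝ) (hμF1 : ∀ z, ∑ x : SF, μF z x = 1)
    (PF : SL → SF → AF → SF → ℝ) (hPF1 : ∀ z x b, ∑ x' : SF, PF z x b x' = 1)
    (πL : (Fin m → ℝ) → SL → AL → ℝ) (hπL1 : ∀ θ s, ∑ a : AL, πL θ s a = 1)
    (πF : (Fin n → ℝ) → SL → SF → AF → ℝ) (hπF1 : ∀ φ z x, ∑ b : AF, πF φ z x b = 1)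
    (θ : Fin m → ℝ) (φ : Fin n → ℝ) (g : SL → AL → ℝ)
    (hg : ∀ s, ∑ a : AL, πL θ s a * g s a = 0) :
    ∀ (t T : ℕ) (hht : t < T + 1) {H : ℕ} (ν : SL → ℝ),
      Etraj PL μF PF πL πF θ φ T H ν
          (fun τ => g (τ.s (Fin.castSucc ⟨t, hht⟩)) (τ.a ⟨t, hht⟩)) = 0 := by
  intro t
  induction t with
  | zero =>
      intro T hht H ν
      have e : (fun τ : Traj SL AL SF AF T H =>
          g (τ.s (Fin.castSucc ⟨0, hht⟩)) (τ.a ⟨0, hht⟩))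
          = fun τ => g (τ.s 0) (τ.a 0) := by
        funext τ
        rw [Fin.mk_zero, Fin.castSucc_zero]
      rw [e, EW1 γ PL hPL1 μF hμF1 PF hPF1 πL hπL1 πF hπF1 θ φ T]
      simp [hg]
  | succ t ih =>
      intro T hht H ν
      match T, hht with
      | T + 1, hht =>
        rw [epeel]
        have hz : ∀ (s0 : SL) (a0 : AL),
            (fun τ : Traj SL AL SF AF T H =>
              g ((Traj.cons s0 a0 τ).s (Fin.castSucc ⟨t + 1, hht⟩))
                ((Traj.cons s0 a0 τ).a ⟨t + 1, hht⟩))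
            = fun τ => g (τ.s (Fin.castSucc ⟨t, by omega⟩)) (τ.a ⟨t, by omega⟩) := by
          intro s0 a0
          funext τ
          have h1 : (Traj.cons s0 a0 τ).s (Fin.castSucc ⟨t + 1, hht⟩)
              = τ.s (Fin.castSucc ⟨t, by omega⟩) := by
            show Fin.cons (α := fun _ => SL) s0 τ.s (Fin.castSucc ⟨t + 1, hht⟩) = _
            rw [show (Fin.castSucc (⟨t + 1, hht⟩ : Fin (T + 2)))
                = Fin.succ (Fin.castSucc ⟨t, by omega⟩) from rfl, Fin.cons_succ]
          have h2 : (Traj.cons s0 a0 τ).a ⟨t + 1, hht⟩ = τ.a ⟨t, by omega⟩ := by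
            show Fin.cons (α := fun _ => AL) a0 τ.a ⟨t + 1, hht⟩ = _
            rw [show ((⟨t + 1, hht⟩ : Fin (T + 2)))
                = Fin.succ (⟨t, by omega⟩ : Fin (T + 1)) from rfl, Fin.cons_succ]
          rw [h1, h2]
        have : ∀ (s0 : SL) (a0 : AL),
            Etraj PL μF PF πL πF θ φ T H (PL s0 a0)
              (fun τ => g ((Traj.cons s0 a0 τ).s (Fin.castSucc ⟨t + 1, hht⟩))
                ((Traj.cons s0 a0 τ).a ⟨t + 1, hht⟩)) = 0 := by
          intro s0 a0
          rw [hz s0 a0]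
          exact ih T (by omega) (PL s0 a0)
        simp only [this, mul_zero, Finset.sum_const_zero]

lemma ECl (γ : ℝ) (PL : SL → AL → SL → ℝ) (hPL1 : ∀ s a, ∑ s' : SL, PL s a s' = 1)
    (μF : SL → SF → ℝ) (hμF1 : ∀ z, ∑ x : SF, μF z x = 1)
    (PF : SL → SF → AF → SF → ℝ) (hPF1 : ∀ z x b, ∑ x' : SF, PF z x b x' = 1)
    (RL : SL → AL → ℝ) (RF : SL → SF → AF → ℝ)
    (πL : (Fin m → ℝ) → SL → AL → ℝ) (hπL1 : ∀ θ s, ∑ a : AL, πL θ s a = 1)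
    (πF : (Fin n → ℝ) → SL → SF → AF → ℝ) (hπF1 : ∀ φ z x, ∑ b : AF, πF φ z x b = 1)
    (θ : Fin m → ℝ) (φ : Fin n → ℝ) (g : SL → AL → ℝ)
    (hg : ∀ s, ∑ a : AL, πL θ s a * g s a = 0) :
    ∀ (t T : ℕ) (hht : t < T + 1) {H : ℕ} (ν : SL → ℝ),
      Etraj PL μF PF πL πF θ φ T H ν
          (fun τ => g (τ.s (Fin.castSucc ⟨t, hht⟩)) (τ.a ⟨t, hht⟩) *
            (Gtot γ RL RF T H τ - γ ^ t *
              advL γ PL μF PF RL RF πL πF H θ φ (T - t)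
                (τ.s (Fin.castSucc ⟨t, hht⟩)) (τ.a ⟨t, hht⟩))) = 0 := by
  intro t
  induction t with
  | zero =>
      intro T hht H ν
      have e : (fun τ : Traj SL AL SF AF T H =>
          g (τ.s (Fin.castSucc ⟨0, hht⟩)) (τ.a ⟨0, hht⟩) *
            (Gtot γ RL RF T H τ - γ ^ 0 *
              advL γ PL μF PF RL RF πL πF H θ φ (T - 0)
                (τ.s (Fin.castSucc ⟨0, hht⟩)) (τ.a ⟨0, hht⟩)))
          = fun τ => (1 : ℝ) * (g (τ.s 0) (τ.a 0) * Gtot γ RL RF T H τ) +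
              (-1 : ℝ) * ((fun s a => g s a *
                advL γ PL μF PF RL RF πL πF H θ φ T s a) (τ.s 0) (τ.a 0)) := by
        funext τ
        rw [Fin.mk_zero, Fin.castSucc_zero, pow_zero, Nat.sub_zero]
        ring
      rw [e, Etraj_lin, EW γ PL hPL1 μF hμF1 PF hPF1 RL RF πL hπL1 πF hπF1 θ φ T]
      rw [EW1 γ PL hPL1 μF hμF1 PF hPF1 πL hπL1 πF hπF1 θ φ T ν
        (fun s a => g s a * advL γ PL μF PF RL RF πL πF H θ φ T s a)]
      have key : ∀ s0 : SL,
          ∑ a0 : AL, πL θ s0 a0 * (g s0 a0 *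
              advL γ PL μF PF RL RF πL πF H θ φ T s0 a0)
            = ∑ a0 : AL, πL θ s0 a0 * g s0 a0 *
                QLrem γ PL μF PF RL RF πL πF H θ φ T s0 a0 := by
        intro s0
        unfold advL
        have e2 : ∀ a0 : AL, πL θ s0 a0 * (g s0 a0 *
            (QLrem γ PL μF PF RL RF πL πF H θ φ T s0 a0 -
              ∑ a' : AL, πL θ s0 a' * QLrem γ PL μF PF RL RF πL πF H θ φ T s0 a'))
            = πL θ s0 a0 * g s0 a0 * QLrem γ PL μF PF RL RF πL πF H θ φ T s0 a0 -
              πL θ s0 a0 * g s0 a0 *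
                (∑ a' : AL, πL θ s0 a' * QLrem γ PL μF PF RL RF πL πF H θ φ T s0 a') :=
          fun a0 => by ring
        simp only [e2]
        rw [Finset.sum_sub_distrib, ← Finset.sum_mul, hg, zero_mul, sub_zero]
      simp only [key]
      ring
  | succ t ih =>
      intro T hht H ν
      match T, hht with
      | T + 1, hht =>
        rw [epeel]
        have hz : ∀ (s0 : SL) (a0 : AL),
            Etraj PL μF PF πL πF θ φ T H (PL s0 a0)
              (fun τ => g ((Traj.cons s0 a0 τ).s (Fin.castSucc ⟨t + 1, hht⟩))
                  ((Traj.cons s0 a0 τ).a ⟨t + 1, hht⟩) *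
                (Gtot γ RL RF (T + 1) H (Traj.cons s0 a0 τ) - γ ^ (t + 1) *
                  advL γ PL μF PF RL RF πL πF H θ φ (T + 1 - (t + 1))
                    ((Traj.cons s0 a0 τ).s (Fin.castSucc ⟨t + 1, hht⟩))
                    ((Traj.cons s0 a0 τ).a ⟨t + 1, hht⟩))) = 0 := by
          intro s0 a0
          have e : (fun τ : Traj SL AL SF AF T H =>
              g ((Traj.cons s0 a0 τ).s (Fin.castSucc ⟨t + 1, hht⟩))
                  ((Traj.cons s0 a0 τ).a ⟨t + 1, hht⟩) *
                (Gtot γ RL RF (T + 1) H (Traj.cons s0 a0 τ) - γ ^ (t + 1) *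
                  advL γ PL μF PF RL RF πL πF H θ φ (T + 1 - (t + 1))
                    ((Traj.cons s0 a0 τ).s (Fin.castSucc ⟨t + 1, hht⟩))
                    ((Traj.cons s0 a0 τ).a ⟨t + 1, hht⟩)))
              = fun τ => RL s0 a0 *
                    (g (τ.s (Fin.castSucc ⟨t, by omega⟩)) (τ.a ⟨t, by omega⟩)) +
                  γ * (g (τ.s (Fin.castSucc ⟨t, by omega⟩)) (τ.a ⟨t, by omega⟩) *
                    (Gtot γ RL RF T H τ - γ ^ t *
                      advL γ PL μF PF RL RF πL πF H θ φ (T - t)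
                        (τ.s (Fin.castSucc ⟨t, by omega⟩)) (τ.a ⟨t, by omega⟩))) := by
            funext τ
            have h1 : (Traj.cons s0 a0 τ).s (Fin.castSucc ⟨t + 1, hht⟩)
                = τ.s (Fin.castSucc ⟨t, by omega⟩) := by
              show Fin.cons (α := fun _ => SL) s0 τ.s (Fin.castSucc ⟨t + 1, hht⟩) = _
              rw [show (Fin.castSucc (⟨t + 1, hht⟩ : Fin (T + 2)))
                  = Fin.succ (Fin.castSucc ⟨t, by omega⟩) from rfl, Fin.cons_succ]
            have h2 : (Traj.cons s0 a0 τ).a ⟨t + 1, hht⟩ = τ.a ⟨t, by omega⟩ := by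
              show Fin.cons (α := fun _ => AL) a0 τ.a ⟨t + 1, hht⟩ = _
              rw [show ((⟨t + 1, hht⟩ : Fin (T + 2)))
                  = Fin.succ (⟨t, by omega⟩ : Fin (T + 1)) from rfl, Fin.cons_succ]
            rw [h1, h2, Gtot_cons, Nat.succ_sub_succ, pow_succ']
            ring
          rw [e, Etraj_lin,
            EZ γ PL hPL1 μF hμF1 PF hPF1 πL hπL1 πF hπF1 θ φ g hg t T (by omega),
            ih T (by omega) (PL s0 a0)]
          ring
        simp only [hz, mul_zero, Finset.sum_const_zero]
end Core
/-- The leader's direct gradient `∇_θ J_L(θ, φ₀)|_{θ = θ₀}` equals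
the gradient of the leader surrogate `L_L` at the behavior parameters. -/
theorem leader_direct_gradient_surrogate
    {SL AL SF AF : Type} [Fintype SL] [Fintype AL] [Fintype SF] [Fintype AF]
    [Nonempty SL] [Nonempty AL] [Nonempty SF] [Nonempty AF]
    {m n T H : ℕ} (γ : ℝ) (hγ0 : 0 < γ) (hγ1 : γ ≤ 1)
    (μL : SL → ℝ) (hμL0 : ∀ s, 0 ≤ μL s) (hμL1 : ∑ s : SL, μL s = 1)
    (PL : SL → AL → SL → ℝ) (hPL0 : ∀ s a s', 0 ≤ PL s a s')
    (hPL1 : ∀ s a, ∑ s' : SL, PL s a s' = 1)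
    (μF : SL → SF → ℝ) (hμF0 : ∀ z x, 0 ≤ μF z x) (hμF1 : ∀ z, ∑ x : SF, μF z x = 1)
    (PF : SL → SF → AF → SF → ℝ) (hPF0 : ∀ z x b x', 0 ≤ PF z x b x')
    (hPF1 : ∀ z x b, ∑ x' : SF, PF z x b x' = 1)
    (RL : SL → AL → ℝ) (RF : SL → SF → AF → ℝ)
    (πL : (Fin m → ℝ) → SL → AL → ℝ) (hπL0 : ∀ θ s a, 0 < πL θ s a)
    (hπL1 : ∀ θ s, ∑ a : AL, πL θ s a = 1)
    (hπLC : ∀ s a, ContDiff ℝ 2 fun θ : Fin m → ℝ => πL θ s a)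
    (πF : (Fin n → ℝ) → SL → SF → AF → ℝ) (hπF0 : ∀ φ z x b, 0 < πF φ z x b)
    (hπF1 : ∀ φ z x, ∑ b : AF, πF φ z x b = 1)
    (hπFC : ∀ z x b, ContDiff ℝ 2 fun φ : Fin n → ℝ => πF φ z x b)
    (θ₀ : Fin m → ℝ) (φ₀ : Fin n → ℝ) :
    fderiv ℝ (fun θ : Fin m → ℝ => JL γ μL PL μF PF RL RF πL πF T H θ φ₀) θ₀
      =
    fderiv ℝ (fun θ : Fin m → ℝ =>
        ∑ τ : Traj SL AL SF AF T H,
          trajProb μL PL μF PF πL πF θ₀ φ₀ τ *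
            ∑ t : Fin (T + 1), γ ^ (t : ℕ) *
              (πL θ (τ.s t.castSucc) (τ.a t) / πL θ₀ (τ.s t.castSucc) (τ.a t)) *
              advL γ PL μF PF RL RF πL πF H θ₀ φ₀ (T - (t : ℕ))
                (τ.s t.castSucc) (τ.a t)) θ₀ := by
  classical
  set D : SL → AL → (Fin m → ℝ) →L[ℝ] ℝ :=
    fun s a => fderiv ℝ (fun θ => πL θ s a) θ₀ with hD
  have hd : ∀ s a, HasFDerivAt (fun θ => πL θ s a) (D s a) θ₀ := fun s a =>
    (((hπLC s a).differentiable (by norm_num)) θ₀).hasFDerivAt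
  -- derivative of the product of policy factors along a trajectory
  have hprod : ∀ τ : Traj SL AL SF AF T H,
      HasFDerivAt (fun θ => ∏ t : Fin (T + 1),
          (πL θ (τ.s t.castSucc) (τ.a t) * PL (τ.s t.castSucc) (τ.a t) (τ.s t.succ)))
        (∑ t : Fin (T + 1),
          (∏ t' ∈ Finset.univ.erase t,
            (πL θ₀ (τ.s t'.castSucc) (τ.a t') * PL (τ.s t'.castSucc) (τ.a t') (τ.s t'.succ))) •
          (PL (τ.s t.castSucc) (τ.a t) (τ.s t.succ) • D (τ.s t.castSucc) (τ.a t))) θ₀ := by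
    intro τ
    exact HasFDerivAt.finset_prod fun t _ =>
      (hd (τ.s t.castSucc) (τ.a t)).mul_const (PL (τ.s t.castSucc) (τ.a t) (τ.s t.succ))
  have hJ : HasFDerivAt (fun θ : Fin m → ℝ => JL γ μL PL μF PF RL RF πL πF T H θ φ₀)
      (∑ τ : Traj SL AL SF AF T H,
        (((∑ t : Fin (T + 1), γ ^ (t : ℕ) * RL (τ.s t.castSucc) (τ.a t)) +
          γ ^ (T + 1) * ∑ k : Fin (H + 1), γ ^ (k : ℕ) * RF τ.z (τ.x k) (τ.b k)) •
        ((∏ k : Fin H, PF τ.z (τ.x k.castSucc) (τ.b k.castSucc) (τ.x k.succ)) •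
        ((∏ k : Fin (H + 1), πF φ₀ τ.z (τ.x k) (τ.b k)) •
        (μF τ.z (τ.x 0) •
        (μL (τ.s 0) •
        (∑ t : Fin (T + 1),
          (∏ t' ∈ Finset.univ.erase t,
            (πL θ₀ (τ.s t'.castSucc) (τ.a t') * PL (τ.s t'.castSucc) (τ.a t') (τ.s t'.succ))) •
          (PL (τ.s t.castSucc) (τ.a t) (τ.s t.succ) • D (τ.s t.castSucc) (τ.a t))))))))) θ₀ := by
    refine HasFDerivAt.fun_sum fun τ _ => ?_
    exact (((((hprod τ).const_mul (μL (τ.s 0))).mul_const (μF τ.z (τ.x 0))).mul_const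
      (∏ k : Fin (H + 1), πF φ₀ τ.z (τ.x k) (τ.b k))).mul_const
      (∏ k : Fin H, PF τ.z (τ.x k.castSucc) (τ.b k.castSucc) (τ.x k.succ))).mul_const _
  have hS : HasFDerivAt (fun θ : Fin m → ℝ =>
      ∑ τ : Traj SL AL SF AF T H,
        trajProb μL PL μF PF πL πF θ₀ φ₀ τ *
          ∑ t : Fin (T + 1), γ ^ (t : ℕ) *
            (πL θ (τ.s t.castSucc) (τ.a t) / πL θ₀ (τ.s t.castSucc) (τ.a t)) *
            advL γ PL μF PF RL RF πL πF H θ₀ φ₀ (T - (t : ℕ))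
              (τ.s t.castSucc) (τ.a t))
      (∑ τ : Traj SL AL SF AF T H,
        trajProb μL PL μF PF πL πF θ₀ φ₀ τ •
          ∑ t : Fin (T + 1),
            advL γ PL μF PF RL RF πL πF H θ₀ φ₀ (T - (t : ℕ))
                (τ.s t.castSucc) (τ.a t) •
              ((γ ^ (t : ℕ)) •
                ((πL θ₀ (τ.s t.castSucc) (τ.a t))⁻¹ • D (τ.s t.castSucc) (τ.a t)))) θ₀ := by
    refine HasFDerivAt.fun_sum fun τ _ => ?_
    refine HasFDerivAt.const_mul (HasFDerivAt.fun_sum fun t _ => ?_) _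
    exact (((hd (τ.s t.castSucc) (τ.a t)).mul_const
      (πL θ₀ (τ.s t.castSucc) (τ.a t))⁻¹).const_mul (γ ^ (t : ℕ))).mul_const _
  rw [hJ.fderiv, hS.fderiv]
  ext v
  simp only [ContinuousLinearMap.sum_apply, ContinuousLinearMap.smul_apply, smul_eq_mul,
    Finset.mul_sum]
  rw [Finset.sum_comm]
  conv_rhs => rw [Finset.sum_comm]
  rw [← sub_eq_zero, ← Finset.sum_sub_distrib]
  refine Finset.sum_eq_zero fun t _ => ?_
  rw [← Finset.sum_sub_distrib]
  have hgv : ∀ s, ∑ a : AL, πL θ₀ s a * (D s a v / πL θ₀ s a) = 0 := by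
    intro s
    have e1 : ∀ a : AL, πL θ₀ s a * (D s a v / πL θ₀ s a) = D s a v := by
      intro a
      have := (hπL0 θ₀ s a).ne'
      field_simp
    simp only [e1]
    have h0 : HasFDerivAt (fun θ => ∑ a : AL, πL θ s a) (∑ a : AL, D s a) θ₀ :=
      HasFDerivAt.fun_sum fun a _ => hd s a
    have he : (fun θ : Fin m → ℝ => ∑ a : AL, πL θ s a) = fun _ => (1 : ℝ) :=
      funext fun θ => hπL1 θ s
    rw [he] at h0
    have h2 : (∑ a : AL, D s a) = 0 := h0.unique (hasFDerivAt_const 1 θ₀)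
    calc ∑ a : AL, (D s a) v = (∑ a : AL, D s a) v :=
          (ContinuousLinearMap.sum_apply _ _ _).symm
      _ = 0 := by rw [h2]; rfl
  have hcl := ECl γ PL hPL1 μF hμF1 PF hPF1 RL RF πL hπL1 πF hπF1 θ₀ φ₀
      (fun s a => D s a v / πL θ₀ s a) hgv (↑t) T t.isLt (H := H) μL
  simp only [Fin.eta] at hcl
  rw [← hcl]
  unfold Etraj
  refine Finset.sum_congr rfl fun τ _ => ?_
  unfold trajProb Gtot
  have hne : πL θ₀ (τ.s t.castSucc) (τ.a t) ≠ 0 := (hπL0 θ₀ _ _).ne'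
  have hpe := Finset.prod_erase_mul Finset.univ
    (fun t' : Fin (T + 1) => πL θ₀ (τ.s t'.castSucc) (τ.a t') *
      PL (τ.s t'.castSucc) (τ.a t') (τ.s t'.succ)) (Finset.mem_univ t)
  have hG : ∑ i : Fin (H + 1), γ ^ (T + 1) * (γ ^ (i : ℕ) * RF τ.z (τ.x i) (τ.b i))
      = γ ^ (T + 1) * ∑ i : Fin (H + 1), γ ^ (i : ℕ) * RF τ.z (τ.x i) (τ.b i) :=
    (Finset.mul_sum _ _ _).symm
  rw [hG, ← hpe]
  field_simp
end

section
/- Policy gradient theorem with advantage weighting for the follower phase: in the finite phase-separated co-design model, for all θ ∈ ℝ^m and φ ∈ ℝ^n, ∇_φ J_F(θ,φ) = Σ_τ P(τ;θ,φ) · Σ_{k=0}^{H−1} γ^k ∇_φ log π_F(φ)(b_k|x_k;s_T) · A_F^{φ,k}(x_k,b_k;s_T). -/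
open scoped BigOperators

variable {SL AL SF AF : Type} [Fintype SL] [Fintype AL] [Fintype SF] [Fintype AF]
variable {m n T H : ℕ}

set_option linter.unusedSectionVars false
set_option maxHeartbeats 1000000

namespace PGA

lemma sum_pi_succ {α : Type*} [Fintype α] {M : Type*} [AddCommMonoid M] {N : ℕ}
    (f : (Fin (N + 1) → α) → M) :
    ∑ g : Fin (N + 1) → α, f g = ∑ a : α, ∑ g : Fin N → α, f (Fin.cons a g) := by
  rw [← (Fin.consEquiv (fun _ : Fin (N + 1) => α)).sum_comp f, Fintype.sum_prod_type]
  rfl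

lemma sum_pi_zero {α : Type*} [Fintype α] {M : Type*} [AddCommMonoid M]
    (f : (Fin 0 → α) → M) : ∑ g : Fin 0 → α, f g = f finZeroElim := by
  rw [Fintype.sum_unique]
  exact congrArg f (Subsingleton.elim _ _)

variable {SF AF : Type} [Fintype SF] [Fintype AF]

lemma sum2_cons {N : ℕ} (F : (Fin (N + 1) → SF) → (Fin (N + 1) → AF) → ℝ) :
    ∑ x : Fin (N + 1) → SF, ∑ b : Fin (N + 1) → AF, F x b
      = ∑ x0 : SF, ∑ b0 : AF, ∑ x : Fin N → SF, ∑ b : Fin N → AF,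
          F (Fin.cons x0 x) (Fin.cons b0 b) := by
  rw [sum_pi_succ (fun x => ∑ b, F x b)]
  refine Finset.sum_congr rfl fun x0 _ => ?_
  calc ∑ xt : Fin N → SF, ∑ b : Fin (N + 1) → AF, F (Fin.cons x0 xt) b
      = ∑ b : Fin (N + 1) → AF, ∑ xt : Fin N → SF, F (Fin.cons x0 xt) b :=
        Finset.sum_comm
    _ = ∑ b0 : AF, ∑ bt : Fin N → AF, ∑ xt : Fin N → SF,
          F (Fin.cons x0 xt) (Fin.cons b0 bt) := sum_pi_succ _
    _ = _ := Finset.sum_congr rfl fun b0 _ => Finset.sum_comm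

def fp (ν : SF → ℝ) (p : SF → AF → ℝ) (P : SF → AF → SF → ℝ) (H : ℕ)
    (x : Fin (H + 1) → SF) (b : Fin (H + 1) → AF) : ℝ :=
  ν (x 0) * (∏ k : Fin (H + 1), p (x k) (b k)) *
    ∏ k : Fin H, P (x k.castSucc) (b k.castSucc) (x k.succ)

lemma fp_zero (ν : SF → ℝ) (p : SF → AF → ℝ) (P : SF → AF → SF → ℝ)
    (x : Fin 1 → SF) (b : Fin 1 → AF) : fp ν p P 0 x b = ν (x 0) * p (x 0) (b 0) := by
  simp [fp]

lemma fp_cons (ν : SF → ℝ) (p : SF → AF → ℝ) (P : SF → AF → SF → ℝ) {H : ℕ}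
    (x0 : SF) (b0 : AF) (x : Fin (H + 1) → SF) (b : Fin (H + 1) → AF) :
    fp ν p P (H + 1) (Fin.cons x0 x) (Fin.cons b0 b)
      = ν x0 * p x0 b0 * fp (P x0 b0) p P H x b := by
  simp only [fp, Fin.prod_univ_succ, Fin.cons_zero, Fin.cons_succ, Fin.castSucc_zero,
    Fin.succ_zero_eq_one]
  have h1 : (Fin.cons x0 x : Fin (H + 2) → SF) 1 = x 0 := by
    rw [show (1 : Fin (H + 2)) = Fin.succ 0 by rfl, Fin.cons_succ]
  have h2 : ∀ k : Fin H, (Fin.cons x0 x : Fin (H + 2) → SF) k.succ.castSucc = x k.castSucc := by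
    intro k; rw [← Fin.succ_castSucc, Fin.cons_succ]
  have h3 : ∀ k : Fin H, (Fin.cons b0 b : Fin (H + 2) → AF) k.succ.castSucc = b k.castSucc := by
    intro k; rw [← Fin.succ_castSucc, Fin.cons_succ]
  simp only [h1, h2, h3, Fin.cons_succ]
  ring

def retW (γ : ℝ) (R : SF → AF → ℝ) (H : ℕ) (x : Fin (H + 1) → SF) (b : Fin (H + 1) → AF) : ℝ :=
  ∑ k : Fin (H + 1), γ ^ (k : ℕ) * R (x k) (b k)

lemma retW_zero (γ : ℝ) (R : SF → AF → ℝ) (x : Fin 1 → SF) (b : Fin 1 → AF) :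
    retW γ R 0 x b = R (x 0) (b 0) := by simp [retW]

lemma retW_cons (γ : ℝ) (R : SF → AF → ℝ) {H : ℕ} (x0 : SF) (b0 : AF)
    (x : Fin (H + 1) → SF) (b : Fin (H + 1) → AF) :
    retW γ R (H + 1) (Fin.cons x0 x) (Fin.cons b0 b) = R x0 b0 + γ * retW γ R H x b := by
  unfold retW
  rw [Fin.sum_univ_succ]
  simp only [Fin.cons_zero, Fin.cons_succ, Fin.val_zero, pow_zero, one_mul, Fin.val_succ]
  congr 1
  rw [Finset.mul_sum]
  exact Finset.sum_congr rfl fun k _ => by ring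

def gsumW (g : SF → AF → ℝ) (H : ℕ) (x : Fin (H + 1) → SF) (b : Fin (H + 1) → AF) : ℝ :=
  ∑ k : Fin (H + 1), g (x k) (b k)

lemma gsumW_zero (g : SF → AF → ℝ) (x : Fin 1 → SF) (b : Fin 1 → AF) :
    gsumW g 0 x b = g (x 0) (b 0) := by simp [gsumW]

lemma gsumW_cons (g : SF → AF → ℝ) {H : ℕ} (x0 : SF) (b0 : AF)
    (x : Fin (H + 1) → SF) (b : Fin (H + 1) → AF) :
    gsumW g (H + 1) (Fin.cons x0 x) (Fin.cons b0 b) = g x0 b0 + gsumW g H x b := by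
  simp [gsumW, Fin.sum_univ_succ]

def qv (γ : ℝ) (p : SF → AF → ℝ) (P : SF → AF → SF → ℝ) (R : SF → AF → ℝ) :
    ℕ → SF → AF → ℝ
  | 0 => fun x b => R x b
  | r + 1 => fun x b =>
      R x b + γ * ∑ x' : SF, P x b x' * ∑ b' : AF, p x' b' * qv γ p P R r x' b'

def av (γ : ℝ) (p : SF → AF → ℝ) (P : SF → AF → SF → ℝ) (R : SF → AF → ℝ)
    (r : ℕ) (x : SF) (b : AF) : ℝ :=
  qv γ p P R r x b - ∑ b' : AF, p x b' * qv γ p P R r x b'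

def advW (γ : ℝ) (p : SF → AF → ℝ) (P : SF → AF → SF → ℝ) (R : SF → AF → ℝ)
    (g : SF → AF → ℝ) (H : ℕ) (x : Fin (H + 1) → SF) (b : Fin (H + 1) → AF) : ℝ :=
  ∑ k : Fin (H + 1), γ ^ (k : ℕ) * g (x k) (b k) * av γ p P R (H - (k : ℕ)) (x k) (b k)

lemma advW_zero (γ : ℝ) (p : SF → AF → ℝ) (P : SF → AF → SF → ℝ) (R : SF → AF → ℝ)
    (g : SF → AF → ℝ) (x : Fin 1 → SF) (b : Fin 1 → AF) :
    advW γ p P R g 0 x b = g (x 0) (b 0) * av γ p P R 0 (x 0) (b 0) := by simp [advW]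

lemma advW_cons (γ : ℝ) (p : SF → AF → ℝ) (P : SF → AF → SF → ℝ) (R : SF → AF → ℝ)
    (g : SF → AF → ℝ) {H : ℕ} (x0 : SF) (b0 : AF)
    (x : Fin (H + 1) → SF) (b : Fin (H + 1) → AF) :
    advW γ p P R g (H + 1) (Fin.cons x0 x) (Fin.cons b0 b)
      = g x0 b0 * av γ p P R (H + 1) x0 b0 + γ * advW γ p P R g H x b := by
  unfold advW
  rw [Fin.sum_univ_succ]
  simp only [Fin.cons_zero, Fin.cons_succ, Fin.val_zero, pow_zero, one_mul, Fin.val_succ,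
    Nat.succ_sub_succ, Nat.sub_zero]
  congr 1
  rw [Finset.mul_sum]
  exact Finset.sum_congr rfl fun k _ => by ring

section Main

variable (γ : ℝ) (p : SF → AF → ℝ) (P : SF → AF → SF → ℝ) (R : SF → AF → ℝ)
  (g : SF → AF → ℝ)

lemma fp_mass (hp : ∀ x, ∑ b : AF, p x b = 1) (hP : ∀ x b, ∑ x' : SF, P x b x' = 1) :
    ∀ (H : ℕ) (ν : SF → ℝ),
      (∑ x : Fin (H + 1) → SF, ∑ b : Fin (H + 1) → AF, fp ν p P H x b) = ∑ x0 : SF, ν x0 := by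
  intro H
  induction H with
  | zero =>
    intro ν
    rw [sum2_cons]
    simp only [sum_pi_zero, fp_zero, Fin.cons_zero]
    simp only [← Finset.mul_sum, hp, mul_one]
  | succ H ih =>
    intro ν
    rw [sum2_cons]
    have inner : ∀ x0 b0,
        (∑ xt : Fin (H + 1) → SF, ∑ bt : Fin (H + 1) → AF,
          fp ν p P (H + 1) (Fin.cons x0 xt) (Fin.cons b0 bt))
        = ν x0 * p x0 b0 := by
      intro x0 b0
      simp only [fp_cons, ← Finset.mul_sum]
      rw [ih (P x0 b0), hP x0 b0, mul_one]
    simp only [inner]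
    simp only [← Finset.mul_sum, hp, mul_one]

lemma fp_value (hp : ∀ x, ∑ b : AF, p x b = 1) (hP : ∀ x b, ∑ x' : SF, P x b x' = 1) :
    ∀ (H : ℕ) (ν : SF → ℝ),
      (∑ x : Fin (H + 1) → SF, ∑ b : Fin (H + 1) → AF,
        fp ν p P H x b * retW γ R H x b)
      = ∑ x0 : SF, ν x0 * ∑ b0 : AF, p x0 b0 * qv γ p P R H x0 b0 := by
  intro H
  induction H with
  | zero =>
    intro ν
    rw [sum2_cons]
    simp only [sum_pi_zero, fp_zero, retW_zero, Fin.cons_zero, qv]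
    simp only [mul_assoc, ← Finset.mul_sum]
  | succ H ih =>
    intro ν
    rw [sum2_cons]
    have inner : ∀ x0 b0,
        (∑ xt : Fin (H + 1) → SF, ∑ bt : Fin (H + 1) → AF,
          fp ν p P (H + 1) (Fin.cons x0 xt) (Fin.cons b0 bt)
            * retW γ R (H + 1) (Fin.cons x0 xt) (Fin.cons b0 bt))
        = ν x0 * (p x0 b0 * qv γ p P R (H + 1) x0 b0) := by
      intro x0 b0
      have e1 : ∀ (xt : Fin (H + 1) → SF) (bt : Fin (H + 1) → AF),
          fp ν p P (H + 1) (Fin.cons x0 xt) (Fin.cons b0 bt)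
            * retW γ R (H + 1) (Fin.cons x0 xt) (Fin.cons b0 bt)
          = (ν x0 * p x0 b0 * R x0 b0) * fp (P x0 b0) p P H xt bt
            + (ν x0 * p x0 b0 * γ) * (fp (P x0 b0) p P H xt bt * retW γ R H xt bt) := by
        intro xt bt; rw [fp_cons, retW_cons]; ring
      simp only [e1, Finset.sum_add_distrib, ← Finset.mul_sum]
      rw [fp_mass p P hp hP H (P x0 b0), hP x0 b0, ih (P x0 b0)]
      simp only [qv]
      ring
    simp only [inner]
    simp only [← Finset.mul_sum]

lemma fp_score (hp : ∀ x, ∑ b : AF, p x b = 1) (hP : ∀ x b, ∑ x' : SF, P x b x' = 1)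
    (hg : ∀ x, ∑ b : AF, p x b * g x b = 0) :
    ∀ (H : ℕ) (ν : SF → ℝ),
      (∑ x : Fin (H + 1) → SF, ∑ b : Fin (H + 1) → AF,
        fp ν p P H x b * gsumW g H x b) = 0 := by
  intro H
  induction H with
  | zero =>
    intro ν
    rw [sum2_cons]
    simp only [sum_pi_zero, fp_zero, gsumW_zero, Fin.cons_zero]
    simp only [mul_assoc, ← Finset.mul_sum, hg]
    simp
  | succ H ih =>
    intro ν
    rw [sum2_cons]
    have inner : ∀ x0 b0,
        (∑ xt : Fin (H + 1) → SF, ∑ bt : Fin (H + 1) → AF,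
          fp ν p P (H + 1) (Fin.cons x0 xt) (Fin.cons b0 bt)
            * gsumW g (H + 1) (Fin.cons x0 xt) (Fin.cons b0 bt))
        = ν x0 * (p x0 b0 * g x0 b0) := by
      intro x0 b0
      have e1 : ∀ (xt : Fin (H + 1) → SF) (bt : Fin (H + 1) → AF),
          fp ν p P (H + 1) (Fin.cons x0 xt) (Fin.cons b0 bt)
            * gsumW g (H + 1) (Fin.cons x0 xt) (Fin.cons b0 bt)
          = (ν x0 * p x0 b0 * g x0 b0) * fp (P x0 b0) p P H xt bt
            + (ν x0 * p x0 b0) * (fp (P x0 b0) p P H xt bt * gsumW g H xt bt) := by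
        intro xt bt; rw [fp_cons, gsumW_cons]; ring
      simp only [e1, Finset.sum_add_distrib, ← Finset.mul_sum]
      rw [fp_mass p P hp hP H (P x0 b0), hP x0 b0, ih (P x0 b0)]
      ring
    simp only [inner]
    simp only [← Finset.mul_sum, hg]
    simp

lemma weighted_av (hg : ∀ x, ∑ b : AF, p x b * g x b = 0) (r : ℕ) (x0 : SF) :
    (∑ b0 : AF, p x0 b0 * (g x0 b0 * av γ p P R r x0 b0))
      = ∑ b0 : AF, p x0 b0 * (g x0 b0 * qv γ p P R r x0 b0) := by
  rw [← sub_eq_zero, ← Finset.sum_sub_distrib]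
  have e : ∀ b0 : AF,
      p x0 b0 * (g x0 b0 * av γ p P R r x0 b0)
        - p x0 b0 * (g x0 b0 * qv γ p P R r x0 b0)
      = (-(∑ b' : AF, p x0 b' * qv γ p P R r x0 b')) * (p x0 b0 * g x0 b0) := by
    intro b0; simp only [av]; ring
  rw [Finset.sum_congr rfl fun b0 _ => e b0, ← Finset.mul_sum, hg x0, mul_zero]

lemma fp_main (hp : ∀ x, ∑ b : AF, p x b = 1) (hP : ∀ x b, ∑ x' : SF, P x b x' = 1)
    (hg : ∀ x, ∑ b : AF, p x b * g x b = 0) :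
    ∀ (H : ℕ) (ν : SF → ℝ),
      (∑ x : Fin (H + 1) → SF, ∑ b : Fin (H + 1) → AF,
        fp ν p P H x b * (gsumW g H x b * retW γ R H x b))
      = ∑ x : Fin (H + 1) → SF, ∑ b : Fin (H + 1) → AF,
          fp ν p P H x b * advW γ p P R g H x b := by
  intro H
  induction H with
  | zero =>
    intro ν
    rw [sum2_cons, sum2_cons]
    simp only [sum_pi_zero, fp_zero, gsumW_zero, retW_zero, advW_zero, Fin.cons_zero]
    refine Finset.sum_congr rfl fun x0 _ => ?_
    have l1 : ∀ b0 : AF, ν x0 * p x0 b0 * (g x0 b0 * R x0 b0)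
        = ν x0 * (p x0 b0 * (g x0 b0 * qv γ p P R 0 x0 b0)) := by
      intro b0; simp only [qv]; ring
    have l2 : ∀ b0 : AF, ν x0 * p x0 b0 * (g x0 b0 * av γ p P R 0 x0 b0)
        = ν x0 * (p x0 b0 * (g x0 b0 * av γ p P R 0 x0 b0)) := by
      intro b0; ring
    rw [Finset.sum_congr rfl fun b0 _ => l1 b0, Finset.sum_congr rfl fun b0 _ => l2 b0,
      ← Finset.mul_sum, ← Finset.mul_sum, weighted_av γ p P R g hg 0 x0]
  | succ H ih =>
    intro ν
    rw [sum2_cons, sum2_cons]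
    have inner1 : ∀ x0 b0,
        (∑ xt : Fin (H + 1) → SF, ∑ bt : Fin (H + 1) → AF,
          fp ν p P (H + 1) (Fin.cons x0 xt) (Fin.cons b0 bt)
            * (gsumW g (H + 1) (Fin.cons x0 xt) (Fin.cons b0 bt)
                * retW γ R (H + 1) (Fin.cons x0 xt) (Fin.cons b0 bt)))
        = ν x0 * (p x0 b0 * (g x0 b0 * qv γ p P R (H + 1) x0 b0
            + γ * (∑ xt : Fin (H + 1) → SF, ∑ bt : Fin (H + 1) → AF,
                fp (P x0 b0) p P H xt bt * advW γ p P R g H xt bt))) := by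
      intro x0 b0
      have e1 : ∀ (xt : Fin (H + 1) → SF) (bt : Fin (H + 1) → AF),
          fp ν p P (H + 1) (Fin.cons x0 xt) (Fin.cons b0 bt)
            * (gsumW g (H + 1) (Fin.cons x0 xt) (Fin.cons b0 bt)
                * retW γ R (H + 1) (Fin.cons x0 xt) (Fin.cons b0 bt))
          = (ν x0 * p x0 b0 * (g x0 b0 * R x0 b0)) * fp (P x0 b0) p P H xt bt
            + (ν x0 * p x0 b0 * (g x0 b0 * γ))
                * (fp (P x0 b0) p P H xt bt * retW γ R H xt bt)
            + (ν x0 * p x0 b0 * R x0 b0)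
                * (fp (P x0 b0) p P H xt bt * gsumW g H xt bt)
            + (ν x0 * p x0 b0 * γ)
                * (fp (P x0 b0) p P H xt bt * (gsumW g H xt bt * retW γ R H xt bt)) := by
        intro xt bt; rw [fp_cons, gsumW_cons, retW_cons]; ring
      simp only [e1, Finset.sum_add_distrib, ← Finset.mul_sum]
      rw [fp_mass p P hp hP H (P x0 b0), hP x0 b0,
        fp_value γ p P R hp hP H (P x0 b0),
        fp_score p P g hp hP hg H (P x0 b0),
        ih (P x0 b0)]
      simp only [qv]
      ring
    have inner2 : ∀ x0 b0,
        (∑ xt : Fin (H + 1) → SF, ∑ bt : Fin (H + 1) → AF,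
          fp ν p P (H + 1) (Fin.cons x0 xt) (Fin.cons b0 bt)
            * advW γ p P R g (H + 1) (Fin.cons x0 xt) (Fin.cons b0 bt))
        = ν x0 * (p x0 b0 * (g x0 b0 * av γ p P R (H + 1) x0 b0
            + γ * (∑ xt : Fin (H + 1) → SF, ∑ bt : Fin (H + 1) → AF,
                fp (P x0 b0) p P H xt bt * advW γ p P R g H xt bt))) := by
      intro x0 b0
      have e2 : ∀ (xt : Fin (H + 1) → SF) (bt : Fin (H + 1) → AF),
          fp ν p P (H + 1) (Fin.cons x0 xt) (Fin.cons b0 bt)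
            * advW γ p P R g (H + 1) (Fin.cons x0 xt) (Fin.cons b0 bt)
          = (ν x0 * p x0 b0 * (g x0 b0 * av γ p P R (H + 1) x0 b0))
              * fp (P x0 b0) p P H xt bt
            + (ν x0 * p x0 b0 * γ)
                * (fp (P x0 b0) p P H xt bt * advW γ p P R g H xt bt) := by
        intro xt bt; rw [fp_cons, advW_cons]; ring
      simp only [e2, Finset.sum_add_distrib, ← Finset.mul_sum]
      rw [fp_mass p P hp hP H (P x0 b0), hP x0 b0]
      ring
    simp only [inner1, inner2]
    refine Finset.sum_congr rfl fun x0 _ => ?_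
    rw [← sub_eq_zero, ← Finset.sum_sub_distrib]
    have e : ∀ b0 : AF,
        ν x0 * (p x0 b0 * (g x0 b0 * qv γ p P R (H + 1) x0 b0
            + γ * (∑ xt : Fin (H + 1) → SF, ∑ bt : Fin (H + 1) → AF,
                fp (P x0 b0) p P H xt bt * advW γ p P R g H xt bt)))
          - ν x0 * (p x0 b0 * (g x0 b0 * av γ p P R (H + 1) x0 b0
            + γ * (∑ xt : Fin (H + 1) → SF, ∑ bt : Fin (H + 1) → AF,
                fp (P x0 b0) p P H xt bt * advW γ p P R g H xt bt)))
        = (ν x0 * (∑ b' : AF, p x0 b' * qv γ p P R (H + 1) x0 b'))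
            * (p x0 b0 * g x0 b0) := by
      intro b0; simp only [av]; ring
    rw [Finset.sum_congr rfl fun b0 _ => e b0, ← Finset.mul_sum, hg x0, mul_zero]

end Main

end PGA

namespace PGA

lemma qv_eq_Qrem {SL SF AF : Type} [Fintype SF] [Fintype AF] {n : ℕ} (γ : ℝ)
    (PF : SL → SF → AF → SF → ℝ) (RF : SL → SF → AF → ℝ)
    (πF : (Fin n → ℝ) → SL → SF → AF → ℝ) (z : SL) (φ : Fin n → ℝ) :
    ∀ (r : ℕ) (x : SF) (b : AF),
      PGA.qv γ (πF φ z) (PF z) (RF z) r x b = Qrem γ PF RF πF z φ r x b := by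
  intro r
  induction r with
  | zero => intro x b; simp [PGA.qv, Qrem]
  | succ r ih => intro x b; simp only [PGA.qv, Qrem, ih]

lemma av_eq_advF {SL SF AF : Type} [Fintype SF] [Fintype AF] {n : ℕ} (γ : ℝ)
    (PF : SL → SF → AF → SF → ℝ) (RF : SL → SF → AF → ℝ)
    (πF : (Fin n → ℝ) → SL → SF → AF → ℝ) (z : SL) (φ : Fin n → ℝ)
    (r : ℕ) (x : SF) (b : AF) :
    PGA.av γ (πF φ z) (PF z) (RF z) r x b = advF γ PF RF πF z φ r x b := by
  simp [PGA.av, advF, qv_eq_Qrem γ PF RF πF z φ]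

lemma sum_traj {SL AL SF AF : Type} [Fintype SL] [Fintype AL] [Fintype SF] [Fintype AF]
    {T H : ℕ} (f : Traj SL AL SF AF T H → ℝ) :
    ∑ τ : Traj SL AL SF AF T H, f τ
      = ∑ s : Fin (T + 2) → SL, ∑ a : Fin (T + 1) → AL,
          ∑ x : Fin (H + 1) → SF, ∑ b : Fin (H + 1) → AF, f ⟨s, a, x, b⟩ := by
  let e : ((Fin (T + 2) → SL) × (Fin (T + 1) → AL) × (Fin (H + 1) → SF) × (Fin (H + 1) → AF))
      ≃ Traj SL AL SF AF T H :=
    { toFun := fun p => ⟨p.1, p.2.1, p.2.2.1, p.2.2.2⟩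
      invFun := fun τ => ⟨τ.s, τ.a, τ.x, τ.b⟩
      left_inv := fun _ => rfl
      right_inv := fun _ => rfl }
  rw [← e.sum_comp f]
  rw [Fintype.sum_prod_type]
  refine Finset.sum_congr rfl fun s _ => ?_
  rw [Fintype.sum_prod_type]
  refine Finset.sum_congr rfl fun a _ => ?_
  rw [Fintype.sum_prod_type]
  rfl

end PGA

/-- Policy gradient theorem with advantage weighting for the
follower phase: `∇_φ J_F(θ, φ) = ∑_τ P(τ;θ,φ) ∑_k γ^k ∇_φ log π_F(φ)(b_k|x_k;s_T) ·
A_F^{φ,k}(x_k, b_k; s_T)`, stated coordinatewise. -/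
theorem follower_policy_gradient_advantage
    {SL AL SF AF : Type} [Fintype SL] [Fintype AL] [Fintype SF] [Fintype AF]
    [Nonempty SL] [Nonempty AL] [Nonempty SF] [Nonempty AF]
    {m n T H : ℕ} (γ : ℝ) (hγ0 : 0 < γ) (hγ1 : γ ≤ 1)
    (μL : SL → ℝ) (hμL0 : ∀ s, 0 ≤ μL s) (hμL1 : ∑ s : SL, μL s = 1)
    (PL : SL → AL → SL → ℝ) (hPL0 : ∀ s a s', 0 ≤ PL s a s')
    (hPL1 : ∀ s a, ∑ s' : SL, PL s a s' = 1)
    (μF : SL → SF → ℝ) (hμF0 : ∀ z x, 0 ≤ μF z x) (hμF1 : ∀ z, ∑ x : SF, μF z x = 1)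
    (PF : SL → SF → AF → SF → ℝ) (hPF0 : ∀ z x b x', 0 ≤ PF z x b x')
    (hPF1 : ∀ z x b, ∑ x' : SF, PF z x b x' = 1)
    (RL : SL → AL → ℝ) (RF : SL → SF → AF → ℝ)
    (πL : (Fin m → ℝ) → SL → AL → ℝ) (hπL0 : ∀ θ s a, 0 < πL θ s a)
    (hπL1 : ∀ θ s, ∑ a : AL, πL θ s a = 1)
    (hπLC : ∀ s a, ContDiff ℝ 2 fun θ : Fin m → ℝ => πL θ s a)
    (πF : (Fin n → ℝ) → SL → SF → AF → ℝ) (hπF0 : ∀ φ z x b, 0 < πF φ z x b)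
    (hπF1 : ∀ φ z x, ∑ b : AF, πF φ z x b = 1)
    (hπFC : ∀ z x b, ContDiff ℝ 2 fun φ : Fin n → ℝ => πF φ z x b) :
    ∀ (θ : Fin m → ℝ) (φ : Fin n → ℝ) (j : Fin n),
      fderiv ℝ (fun φ' : Fin n → ℝ => JF γ μL PL μF PF RF πL πF T H θ φ') φ
          (Pi.single j 1)
        =
      ∑ τ : Traj SL AL SF AF T H,
        trajProb μL PL μF PF πL πF θ φ τ *
          ∑ k : Fin (H + 1), γ ^ (k : ℕ) *
            fderiv ℝ (fun φ' : Fin n → ℝ =>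
              Real.log (πF φ' τ.z (τ.x k) (τ.b k))) φ (Pi.single j 1) *
            advF γ PF RF πF τ.z φ (H - (k : ℕ)) (τ.x k) (τ.b k) := by
  intro θ φ j
  -- basic differentiability facts
  have hπd : ∀ (z : SL) (x : SF) (b : AF),
      HasFDerivAt (fun φ' : Fin n → ℝ => πF φ' z x b)
        (fderiv ℝ (fun φ' : Fin n → ℝ => πF φ' z x b) φ) φ :=
    fun z x b => (((hπFC z x b).differentiable two_ne_zero) φ).hasFDerivAt
  -- sum of the derivatives of the probabilities vanishes
  have hzero : ∀ (z : SL) (x : SF),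
      (∑ b : AF, fderiv ℝ (fun φ' : Fin n → ℝ => πF φ' z x b) φ) = 0 := by
    intro z x
    have h1 : HasFDerivAt (fun φ' : Fin n → ℝ => ∑ b : AF, πF φ' z x b)
        (∑ b : AF, fderiv ℝ (fun φ' : Fin n → ℝ => πF φ' z x b) φ) φ :=
      HasFDerivAt.fun_sum fun b _ => hπd z x b
    have h2 : (fun φ' : Fin n → ℝ => ∑ b : AF, πF φ' z x b) = fun _ => (1 : ℝ) :=
      funext fun φ' => hπF1 φ' z x
    rw [h2] at h1
    exact h1.unique (hasFDerivAt_const 1 φ)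
  have hzv : ∀ (z : SL) (x : SF),
      (∑ b : AF, fderiv ℝ (fun φ' : Fin n → ℝ => πF φ' z x b) φ (Pi.single j 1)) = 0 := by
    intro z x
    have := congrArg (fun L : (Fin n → ℝ) →L[ℝ] ℝ => L (Pi.single j 1)) (hzero z x)
    simpa using this
  have hg : ∀ (z : SL) (x : SF),
      (∑ b : AF, πF φ z x b *
        ((πF φ z x b)⁻¹ *
          fderiv ℝ (fun φ' : Fin n → ℝ => πF φ' z x b) φ (Pi.single j 1))) = 0 := by
    intro z x
    have e : ∀ b : AF, πF φ z x b *
        ((πF φ z x b)⁻¹ *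
          fderiv ℝ (fun φ' : Fin n → ℝ => πF φ' z x b) φ (Pi.single j 1))
        = fderiv ℝ (fun φ' : Fin n → ℝ => πF φ' z x b) φ (Pi.single j 1) := by
      intro b
      rw [← mul_assoc, mul_inv_cancel₀ (ne_of_gt (hπF0 φ z x b)), one_mul]
    rw [Finset.sum_congr rfl fun b _ => e b]
    exact hzv z x
  have hlog : ∀ (z : SL) (x : SF) (b : AF),
      fderiv ℝ (fun φ' : Fin n → ℝ => Real.log (πF φ' z x b)) φ (Pi.single j 1)
        = (πF φ z x b)⁻¹ *
            fderiv ℝ (fun φ' : Fin n → ℝ => πF φ' z x b) φ (Pi.single j 1) := by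
    intro z x b
    rw [((hπd z x b).log (ne_of_gt (hπF0 φ z x b))).fderiv]
    simp
  -- derivative of J_F
  have hJFd : HasFDerivAt (fun φ' : Fin n → ℝ => JF γ μL PL μF PF RF πL πF T H θ φ')
      (∑ τ : Traj SL AL SF AF T H,
        (μL (τ.s 0) *
          (∏ t : Fin (T + 1),
            πL θ (τ.s t.castSucc) (τ.a t) * PL (τ.s t.castSucc) (τ.a t) (τ.s t.succ)) *
          μF τ.z (τ.x 0) *
          (∏ k : Fin H, PF τ.z (τ.x k.castSucc) (τ.b k.castSucc) (τ.x k.succ)) *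
          (∑ k : Fin (H + 1), γ ^ (k : ℕ) * RF τ.z (τ.x k) (τ.b k))) •
        (∑ k : Fin (H + 1),
          (∏ l ∈ Finset.univ.erase k, πF φ τ.z (τ.x l) (τ.b l)) •
            fderiv ℝ (fun φ' : Fin n → ℝ => πF φ' τ.z (τ.x k) (τ.b k)) φ)) φ := by
    have hfun : (fun φ' : Fin n → ℝ => JF γ μL PL μF PF RF πL πF T H θ φ')
        = fun φ' : Fin n → ℝ => ∑ τ : Traj SL AL SF AF T H,
            (μL (τ.s 0) *
              (∏ t : Fin (T + 1),
                πL θ (τ.s t.castSucc) (τ.a t) * PL (τ.s t.castSucc) (τ.a t) (τ.s t.succ)) *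
              μF τ.z (τ.x 0) *
              (∏ k : Fin H, PF τ.z (τ.x k.castSucc) (τ.b k.castSucc) (τ.x k.succ)) *
              (∑ k : Fin (H + 1), γ ^ (k : ℕ) * RF τ.z (τ.x k) (τ.b k))) *
            ∏ k : Fin (H + 1), πF φ' τ.z (τ.x k) (τ.b k) := by
      funext φ'
      simp only [JF, trajProb]
      exact Finset.sum_congr rfl fun τ _ => by ring
    rw [hfun]
    exact HasFDerivAt.fun_sum fun τ _ =>
      (HasFDerivAt.finset_prod fun k _ => hπd τ.z (τ.x k) (τ.b k)).const_mul _
  rw [hJFd.fderiv]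
  simp only [ContinuousLinearMap.sum_apply, ContinuousLinearMap.smul_apply, smul_eq_mul]
  -- rewrite the left-hand side into the canonical form
  have lhs_eq : ∀ τ : Traj SL AL SF AF T H,
      (μL (τ.s 0) *
        (∏ t : Fin (T + 1),
          πL θ (τ.s t.castSucc) (τ.a t) * PL (τ.s t.castSucc) (τ.a t) (τ.s t.succ)) *
        μF τ.z (τ.x 0) *
        (∏ k : Fin H, PF τ.z (τ.x k.castSucc) (τ.b k.castSucc) (τ.x k.succ)) *
        (∑ k : Fin (H + 1), γ ^ (k : ℕ) * RF τ.z (τ.x k) (τ.b k))) *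
      (∑ k : Fin (H + 1),
        (∏ l ∈ Finset.univ.erase k, πF φ τ.z (τ.x l) (τ.b l)) *
          fderiv ℝ (fun φ' : Fin n → ℝ => πF φ' τ.z (τ.x k) (τ.b k)) φ (Pi.single j 1))
      = (μL (τ.s 0) *
          ∏ t : Fin (T + 1),
            πL θ (τ.s t.castSucc) (τ.a t) * PL (τ.s t.castSucc) (τ.a t) (τ.s t.succ)) *
        (PGA.fp (μF τ.z) (πF φ τ.z) (PF τ.z) H τ.x τ.b *
          (PGA.gsumW
              (fun x b => (πF φ τ.z x b)⁻¹ *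
                fderiv ℝ (fun φ' : Fin n → ℝ => πF φ' τ.z x b) φ (Pi.single j 1)) H τ.x τ.b *
            PGA.retW γ (RF τ.z) H τ.x τ.b)) := by
    intro τ
    have e : ∀ k : Fin (H + 1),
        (∏ l ∈ Finset.univ.erase k, πF φ τ.z (τ.x l) (τ.b l)) *
          fderiv ℝ (fun φ' : Fin n → ℝ => πF φ' τ.z (τ.x k) (τ.b k)) φ (Pi.single j 1)
        = (∏ l : Fin (H + 1), πF φ τ.z (τ.x l) (τ.b l)) *
            ((πF φ τ.z (τ.x k) (τ.b k))⁻¹ *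
              fderiv ℝ (fun φ' : Fin n → ℝ => πF φ' τ.z (τ.x k) (τ.b k)) φ (Pi.single j 1)) := by
      intro k
      have h1 : (∏ l ∈ Finset.univ.erase k, πF φ τ.z (τ.x l) (τ.b l)) * πF φ τ.z (τ.x k) (τ.b k)
          = ∏ l : Fin (H + 1), πF φ τ.z (τ.x l) (τ.b l) :=
        Finset.prod_erase_mul _ _ (Finset.mem_univ k)
      have hne := ne_of_gt (hπF0 φ τ.z (τ.x k) (τ.b k))
      rw [← h1]
      field_simp
    rw [Finset.sum_congr rfl fun k _ => e k, ← Finset.mul_sum]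
    simp only [PGA.fp, PGA.gsumW, PGA.retW]
    ring
  refine Eq.trans (Finset.sum_congr rfl fun τ _ => lhs_eq τ) ?_
  -- rewrite the right-hand side into the canonical form
  have rhs_eq : ∀ τ : Traj SL AL SF AF T H,
      trajProb μL PL μF PF πL πF θ φ τ *
        (∑ k : Fin (H + 1), γ ^ (k : ℕ) *
          fderiv ℝ (fun φ' : Fin n → ℝ =>
            Real.log (πF φ' τ.z (τ.x k) (τ.b k))) φ (Pi.single j 1) *
          advF γ PF RF πF τ.z φ (H - (k : ℕ)) (τ.x k) (τ.b k))
      = (μL (τ.s 0) *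
          ∏ t : Fin (T + 1),
            πL θ (τ.s t.castSucc) (τ.a t) * PL (τ.s t.castSucc) (τ.a t) (τ.s t.succ)) *
        (PGA.fp (μF τ.z) (πF φ τ.z) (PF τ.z) H τ.x τ.b *
          PGA.advW γ (πF φ τ.z) (PF τ.z) (RF τ.z)
            (fun x b => (πF φ τ.z x b)⁻¹ *
              fderiv ℝ (fun φ' : Fin n → ℝ => πF φ' τ.z x b) φ (Pi.single j 1)) H τ.x τ.b) := by
    intro τ
    have e : ∀ k : Fin (H + 1),
        γ ^ (k : ℕ) *
          fderiv ℝ (fun φ' : Fin n → ℝ =>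
            Real.log (πF φ' τ.z (τ.x k) (τ.b k))) φ (Pi.single j 1) *
          advF γ PF RF πF τ.z φ (H - (k : ℕ)) (τ.x k) (τ.b k)
        = γ ^ (k : ℕ) *
            ((πF φ τ.z (τ.x k) (τ.b k))⁻¹ *
              fderiv ℝ (fun φ' : Fin n → ℝ => πF φ' τ.z (τ.x k) (τ.b k)) φ (Pi.single j 1)) *
            PGA.av γ (πF φ τ.z) (PF τ.z) (RF τ.z) (H - (k : ℕ)) (τ.x k) (τ.b k) := by
      intro k
      rw [hlog τ.z (τ.x k) (τ.b k), PGA.av_eq_advF γ PF RF πF τ.z φ]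
    rw [Finset.sum_congr rfl fun k _ => e k]
    simp only [trajProb, PGA.fp, PGA.advW]
    ring
  refine Eq.trans ?_ (Finset.sum_congr rfl fun τ _ => (rhs_eq τ).symm)
  -- final combinatorial identity
  rw [PGA.sum_traj, PGA.sum_traj]
  refine Finset.sum_congr rfl fun s _ => Finset.sum_congr rfl fun a _ => ?_
  dsimp only [Traj.z]
  simp only [← Finset.mul_sum]
  exact congrArg _
    (PGA.fp_main γ (πF φ (s (Fin.last (T + 1)))) (PF (s (Fin.last (T + 1))))
      (RF (s (Fin.last (T + 1))))
      (fun x b => (πF φ (s (Fin.last (T + 1))) x b)⁻¹ *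
        fderiv ℝ (fun φ' : Fin n → ℝ => πF φ' (s (Fin.last (T + 1))) x b) φ (Pi.single j 1))
      (hπF1 φ (s (Fin.last (T + 1)))) (hPF1 (s (Fin.last (T + 1))))
      (hg (s (Fin.last (T + 1)))) H (μF (s (Fin.last (T + 1)))))
end

section
/- Stackelberg leader gradient decomposition via implicit differentiation: let f, h : ℝ^m × ℝ^n → ℝ with f twice continuously differentiable and h continuously differentiable, and let g : ℝ^m → ℝ^n be differentiable at x₀ and satisfy ∇_y f(x, g(x)) = 0 for all x in a neighborhood of x₀, with H = ∇²_{yy} f(x₀, g(x₀)) invertible. Then the gradient of the composite map x ↦ h(x, g(x)) at x₀ equals ∇_x h(x₀, g(x₀)) − (∇²_{yx} f(x₀, g(x₀)))ᵀ · H^{−1} · ∇_y h(x₀, g(x₀)), where H is symmetric by equality of mixed partial derivatives. -/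
open scoped BigOperators
open Matrix

/-- Stackelberg leader gradient decomposition via implicit
differentiation: with `f` twice continuously differentiable, `h` continuously
differentiable, `g` differentiable at `x₀` satisfying `∇_y f(x, g(x)) = 0` near
`x₀`, and `H = ∇²_{yy} f(x₀, g(x₀))` invertible, the gradient of `x ↦ h(x, g(x))`
at `x₀` equals `∇_x h(x₀, g(x₀)) - (∇²_{yx} f(x₀, g(x₀)))ᵀ · H⁻¹ · ∇_y h(x₀, g(x₀))`
(where `H` is symmetric by equality of mixed partial derivatives). -/
theorem stackelberg_leader_gradient_decomposition {m n : ℕ}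
    (f h : (Fin m → ℝ) → (Fin n → ℝ) → ℝ) (g : (Fin m → ℝ) → (Fin n → ℝ))
    (x₀ : Fin m → ℝ)
    (hf : ContDiff ℝ 2 fun p : (Fin m → ℝ) × (Fin n → ℝ) => f p.1 p.2)
    (hh : ContDiff ℝ 1 fun p : (Fin m → ℝ) × (Fin n → ℝ) => h p.1 p.2)
    (hg : DifferentiableAt ℝ g x₀)
    (hopt : ∀ᶠ x in nhds x₀, ∀ i : Fin n,
      fderiv ℝ (fun y : Fin n → ℝ => f x y) (g x) (Pi.single i 1) = 0)
    (Hmat : Matrix (Fin n) (Fin n) ℝ)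
    (hH : Hmat = Matrix.of fun i j : Fin n =>
      fderiv ℝ (fun y : Fin n → ℝ =>
        fderiv ℝ (fun y' : Fin n → ℝ => f x₀ y') y (Pi.single j 1)) (g x₀)
        (Pi.single i 1))
    (hHinv : IsUnit Hmat)
    (C : Matrix (Fin n) (Fin m) ℝ)
    (hC : C = Matrix.of fun (i : Fin n) (j : Fin m) =>
      fderiv ℝ (fun y : Fin n → ℝ =>
        fderiv ℝ (fun x : Fin m → ℝ => f x y) x₀ (Pi.single j 1)) (g x₀)
        (Pi.single i 1)) :
    (fun j : Fin m => fderiv ℝ (fun x : Fin m → ℝ => h x (g x)) x₀ (Pi.single j 1))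
      =
    (fun j : Fin m => fderiv ℝ (fun x : Fin m → ℝ => h x (g x₀)) x₀ (Pi.single j 1))
      - Cᵀ *ᵥ (Hmat⁻¹ *ᵥ fun i : Fin n =>
          fderiv ℝ (fun y : Fin n → ℝ => h x₀ y) (g x₀) (Pi.single i 1)) := by
  classical
  let E := Fin m → ℝ
  let Y := Fin n → ℝ
  set F : (Fin m → ℝ) × (Fin n → ℝ) → ℝ := fun p => f p.1 p.2 with hF
  set p₀ : E × Y := (x₀, g x₀) with hp₀
  have hFd : Differentiable ℝ F := hf.differentiable (by norm_num)
  have hF1 : ContDiff ℝ 1 (fderiv ℝ F) := hf.fderiv_right (by norm_num)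
  have hF1d : Differentiable ℝ (fderiv ℝ F) := hF1.differentiable one_ne_zero
  set B : (E × Y) →L[ℝ] (E × Y) →L[ℝ] ℝ := fderiv ℝ (fderiv ℝ F) p₀ with hB
  have Bsymm : ∀ v w, B v w = B w v :=
    second_derivative_symmetric (fun y => (hFd y).hasFDerivAt) (hF1d p₀).hasFDerivAt
  set Dg : E →L[ℝ] Y := fderiv ℝ g x₀ with hDg
  -- partial derivative in y as a slice of the full derivative
  have key_y : ∀ (x : E) (y : Y),
      fderiv ℝ (fun y' => f x y') y
        = (fderiv ℝ F (x, y)).comp (ContinuousLinearMap.inr ℝ E Y) := by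
    intro x y
    exact ((hFd (x, y)).hasFDerivAt.comp y (hasFDerivAt_prodMk_right x y)).fderiv
  have key_x : ∀ (x : E) (y : Y),
      fderiv ℝ (fun x' => f x' y) x
        = (fderiv ℝ F (x, y)).comp (ContinuousLinearMap.inl ℝ E Y) := by
    intro x y
    exact ((hFd (x, y)).hasFDerivAt.comp x ((hasFDerivAt_prodMk_left x y : HasFDerivAt (fun x' : E => (x', y)) (ContinuousLinearMap.inl ℝ E Y) x))).fderiv
  -- entries of Hmat
  have hHentry : ∀ i j : Fin n,
      Hmat i j = B (0, Pi.single i 1) (0, Pi.single j 1) := by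
    intro i j
    have h1 : (fun y : Y => fderiv ℝ (fun y' => f x₀ y') y (Pi.single j 1))
        = fun y : Y => fderiv ℝ F (x₀, y) ((0 : E), Pi.single j 1) := by
      funext y; rw [key_y]; rfl
    have h2 : HasFDerivAt (fun y : Y => fderiv ℝ F (x₀, y) ((0 : E), Pi.single j 1))
        ((B.comp (ContinuousLinearMap.inr ℝ E Y)).flip ((0 : E), Pi.single j 1)) (g x₀) := by
      have hc : HasFDerivAt (fun y : Y => fderiv ℝ F (x₀, y))
          (B.comp (ContinuousLinearMap.inr ℝ E Y)) (g x₀) :=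
        (hF1d p₀).hasFDerivAt.comp (g x₀) (hasFDerivAt_prodMk_right x₀ (g x₀))
      have := hc.clm_apply (hasFDerivAt_const ((0 : E), Pi.single j 1) (g x₀))
      simpa using this
    rw [hH]
    simp only [Matrix.of_apply]
    rw [h1, h2.fderiv]
    rfl
  -- entries of C
  have hCentry : ∀ (i : Fin n) (j : Fin m),
      C i j = B (0, Pi.single i 1) (Pi.single j 1, 0) := by
    intro i j
    have h1 : (fun y : Y => fderiv ℝ (fun x' => f x' y) x₀ (Pi.single j 1))
        = fun y : Y => fderiv ℝ F (x₀, y) (Pi.single j 1, (0 : Y)) := by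
      funext y; rw [key_x]; rfl
    have h2 : HasFDerivAt (fun y : Y => fderiv ℝ F (x₀, y) (Pi.single j 1, (0 : Y)))
        ((B.comp (ContinuousLinearMap.inr ℝ E Y)).flip (Pi.single j 1, (0 : Y))) (g x₀) := by
      have hc : HasFDerivAt (fun y : Y => fderiv ℝ F (x₀, y))
          (B.comp (ContinuousLinearMap.inr ℝ E Y)) (g x₀) :=
        (hF1d p₀).hasFDerivAt.comp (g x₀) (hasFDerivAt_prodMk_right x₀ (g x₀))
      have := hc.clm_apply (hasFDerivAt_const (Pi.single j 1, (0 : Y)) (g x₀))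
      simpa using this
    rw [hC]
    simp only [Matrix.of_apply]
    rw [h1, h2.fderiv]
    rfl
  -- differentiate the optimality condition
  have hopt' : ∀ i : Fin n, ∀ j : Fin m,
      B (Pi.single j 1, Dg (Pi.single j 1)) (0, Pi.single i 1) = 0 := by
    intro i j
    have hxg : HasFDerivAt (fun x : E => (x, g x))
        ((ContinuousLinearMap.id ℝ E).prod Dg) x₀ :=
      (hasFDerivAt_id x₀).prodMk hg.hasFDerivAt
    have hc : HasFDerivAt (fun x : E => fderiv ℝ F (x, g x))
        (B.comp ((ContinuousLinearMap.id ℝ E).prod Dg)) x₀ :=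
      (hF1d p₀).hasFDerivAt.comp x₀ hxg
    have hder : HasFDerivAt (fun x : E => fderiv ℝ F (x, g x) ((0 : E), Pi.single i 1))
        ((B.comp ((ContinuousLinearMap.id ℝ E).prod Dg)).flip ((0 : E), Pi.single i 1)) x₀ := by
      have := hc.clm_apply (hasFDerivAt_const ((0 : E), Pi.single i 1) x₀)
      simpa using this
    have hev : (fun x : E => fderiv ℝ F (x, g x) ((0 : E), Pi.single i 1))
        =ᶠ[nhds x₀] fun _ => (0 : ℝ) := by
      filter_upwards [hopt] with x hx
      have := hx i
      rw [key_y x (g x)] at this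
      exact this
    have hz : fderiv ℝ (fun x : E => fderiv ℝ F (x, g x) ((0 : E), Pi.single i 1)) x₀ = 0 := by
      rw [hev.fderiv_eq]; exact fderiv_const_apply 0
    have := hder.fderiv
    rw [hz] at this
    have := congrFun (congrArg (fun (L : E →L[ℝ] ℝ) => (L : E → ℝ)) this.symm) (Pi.single j 1)
    simpa using this
  -- derivative of h data
  have hhd : Differentiable ℝ (fun p : E × Y => h p.1 p.2) := hh.differentiable one_ne_zero
  set DH : (E × Y) →L[ℝ] ℝ := fderiv ℝ (fun p : E × Y => h p.1 p.2) p₀ with hDH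
  have hLHS : ∀ j : Fin m,
      fderiv ℝ (fun x : E => h x (g x)) x₀ (Pi.single j 1)
        = DH (Pi.single j 1, Dg (Pi.single j 1)) := by
    intro j
    have : HasFDerivAt (fun x : E => h x (g x))
        (DH.comp ((ContinuousLinearMap.id ℝ E).prod Dg)) x₀ :=
      by have := (hhd p₀).hasFDerivAt.comp x₀ (((hasFDerivAt_id x₀).prodMk hg.hasFDerivAt : HasFDerivAt (fun x : E => (x, g x)) ((ContinuousLinearMap.id ℝ E).prod Dg) x₀)); exact this
    rw [this.fderiv]; rfl
  have hRHS1 : ∀ j : Fin m,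
      fderiv ℝ (fun x : E => h x (g x₀)) x₀ (Pi.single j 1)
        = DH (Pi.single j 1, (0 : Y)) := by
    intro j
    have : HasFDerivAt (fun x : E => h x (g x₀))
        (DH.comp (ContinuousLinearMap.inl ℝ E Y)) x₀ :=
      by have := (hhd p₀).hasFDerivAt.comp x₀ ((hasFDerivAt_prodMk_left x₀ (g x₀) : HasFDerivAt (fun x : E => (x, g x₀)) (ContinuousLinearMap.inl ℝ E Y) x₀)); exact this
    rw [this.fderiv]; rfl
  have hb : ∀ i : Fin n,
      fderiv ℝ (fun y : Y => h x₀ y) (g x₀) (Pi.single i 1) = DH ((0 : E), Pi.single i 1) := by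
    intro i
    have : HasFDerivAt (fun y : Y => h x₀ y)
        (DH.comp (ContinuousLinearMap.inr ℝ E Y)) (g x₀) :=
      (hhd p₀).hasFDerivAt.comp (g x₀) (hasFDerivAt_prodMk_right x₀ (g x₀))
    rw [this.fderiv]; rfl
  -- expansion of a CLM on a pi-vector
  have expand : ∀ {W : Type} [NormedAddCommGroup W] [NormedSpace ℝ W]
      (L : Y →L[ℝ] W) (v : Y), L v = ∑ i, v i • L (Pi.single i 1) := by
    intro W _ _ L v
    conv_lhs => rw [← Finset.univ_sum_single v]
    rw [map_sum]
    refine Finset.sum_congr rfl fun i _ => ?_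
    rw [← L.map_smul]
    congr 1
    rw [← Pi.single_smul, smul_eq_mul, mul_one]
  -- matrices
  set J : Matrix (Fin n) (Fin m) ℝ :=
    Matrix.of (fun i j => Dg (Pi.single j 1) i) with hJ
  set b : Fin n → ℝ := fun i => DH ((0 : E), Pi.single i 1) with hbdef
  -- Hmat * J = -C
  have hHJ : Hmat * J = -C := by
    ext i j
    have h0 := hopt' i j
    rw [Bsymm] at h0
    have hsplit : ((Pi.single j 1 : E), Dg (Pi.single j 1))
        = ((Pi.single j 1 : E), (0 : Y)) + ((0 : E), Dg (Pi.single j 1)) := by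
      simp
    rw [hsplit, map_add] at h0
    have hexp : B (0, Pi.single i 1) ((0 : E), Dg (Pi.single j 1))
        = ∑ k, Dg (Pi.single j 1) k • B (0, Pi.single i 1) ((0 : E), Pi.single k 1) := by
      have := expand ((B ((0 : E), Pi.single i 1)).comp (ContinuousLinearMap.inr ℝ E Y))
        (Dg (Pi.single j 1))
      simpa using this
    rw [hexp] at h0
    have : C i j + ∑ k, Hmat i k * J k j = 0 := by
      rw [hCentry i j, hJ]
      convert h0 using 2
      refine Finset.sum_congr rfl fun k _ => ?_
      rw [hHentry i k]
      simp [mul_comm, smul_eq_mul]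
    rw [Matrix.mul_apply, Matrix.neg_apply]
    linarith [this]
  have hdet : IsUnit Hmat.det := (Matrix.isUnit_iff_isUnit_det Hmat).mp hHinv
  have hJeq : J = -(Hmat⁻¹ * C) := by
    calc J = (Hmat⁻¹ * Hmat) * J := by rw [Matrix.nonsing_inv_mul Hmat hdet, Matrix.one_mul]
    _ = Hmat⁻¹ * (Hmat * J) := by rw [Matrix.mul_assoc]
    _ = Hmat⁻¹ * (-C) := by rw [hHJ]
    _ = -(Hmat⁻¹ * C) := by rw [Matrix.mul_neg]
  have hHsymm : Hmatᵀ = Hmat := by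
    ext i j
    rw [Matrix.transpose_apply, hHentry i j, hHentry j i, Bsymm]
  -- final computation
  funext j
  have hexpand2 : DH ((0 : E), Dg (Pi.single j 1))
      = ∑ i, Dg (Pi.single j 1) i • DH ((0 : E), Pi.single i 1) := by
    have := expand (DH.comp (ContinuousLinearMap.inr ℝ E Y)) (Dg (Pi.single j 1))
    simpa using this
  have hsplit : ((Pi.single j 1 : E), Dg (Pi.single j 1))
      = ((Pi.single j 1 : E), (0 : Y)) + ((0 : E), Dg (Pi.single j 1)) := by simp
  have lhs_eq : fderiv ℝ (fun x : E => h x (g x)) x₀ (Pi.single j 1)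
      = DH (Pi.single j 1, (0 : Y)) + (Jᵀ *ᵥ b) j := by
    rw [hLHS j, hsplit, map_add, hexpand2]
    congr 1
  have hJT : Jᵀ = -(Cᵀ * Hmat⁻¹) := by
    rw [hJeq, Matrix.transpose_neg, Matrix.transpose_mul, Matrix.transpose_nonsing_inv, hHsymm]
  have rhs_vec : (fun i : Fin n =>
      fderiv ℝ (fun y : Y => h x₀ y) (g x₀) (Pi.single i 1)) = b := by
    funext i; rw [hb i, hbdef]
  simp only [Pi.sub_apply]
  rw [lhs_eq, hRHS1 j, rhs_vec, hJT]
  rw [Matrix.neg_mulVec, ← Matrix.mulVec_mulVec]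
  simp [sub_eq_add_neg]
end
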